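/- arXiv:1607.05310 — 9 statements merged into one kernel-verified Lean document; each statement's English description precedes it below -/
import Mathlib

section
/- Let G be a group acting on the real line by order-preserving homeomorphisms such that no two elements of G are crossed. Assume there exists T ∈ G with T(x) ≠ x for all x ∈ ℝ. Then there exists a nonzero Radon measure μ on ℝ that is invariant under G, i.e., g_*μ = μ for all g ∈ G, where g_*μ(B) = μ(g⁻¹(B)). -/
open MeasureTheory

/-- A Borel measure on ℝ is a Radon measure if it gives finite mass to compact sets. -/
def IsRadon (μ : Measure ℝ) : Prop := ∀ K : Set ℝ, IsCompact K → μ K < ⊤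

/-- Two order-preserving maps `f`, `g` of the line are crossed if there are `a < b` with
`f a = a`, `g b = b`, and `f x < x < g x` for every `x ∈ (a, b)`. -/
def Crossed (f g : ℝ → ℝ) : Prop :=
  ∃ a b : ℝ, a < b ∧ f a = a ∧ g b = b ∧ ∀ x ∈ Set.Ioo a b, f x < x ∧ x < g x

open Set

namespace Sol
variable {G : Type*} [Group G]
section basic
variable (ρ : G →* (ℝ ≃o ℝ))
lemma rmul (g h : G) (x : ℝ) : ρ (g*h) x = ρ g (ρ h x) := by rw [map_mul]; rfl
lemma rone (x : ℝ) : ρ 1 x = x := by rw [map_one]; rfl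
lemma rinv (g : G) (x : ℝ) : ρ g⁻¹ (ρ g x) = x := by rw [← rmul, inv_mul_cancel, rone]
lemma rinv' (g : G) (x : ℝ) : ρ g (ρ g⁻¹ x) = x := by rw [← rmul, mul_inv_cancel, rone]
lemma rlt (g : G) {x y : ℝ} : ρ g x < ρ g y ↔ x < y := (ρ g).lt_iff_lt
lemma rle (g : G) {x y : ℝ} : ρ g x ≤ ρ g y ↔ x ≤ y := (ρ g).le_iff_le
def Fp (g : G) : Prop := ∃ x, ρ g x = x
def Nng (g : G) : Prop := ∃ x, x ≤ ρ g x
lemma fp_closed (g : G) : IsClosed {z : ℝ | ρ g z = z} := by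
  have : {z : ℝ | ρ g z = z} = {z | ρ g z - z = 0} := by ext z; simp [sub_eq_zero]
  rw [this]
  exact isClosed_eq (((ρ g).toHomeomorph.continuous).sub continuous_id) continuous_const
lemma exists_fixed (g : G) {x y : ℝ} (hx : x ≤ ρ g x) (hy : ρ g y ≤ y) :
    ∃ z ∈ Set.uIcc x y, ρ g z = z := by
  have hc : ContinuousOn (fun t => ρ g t - t) (Set.uIcc x y) :=
    (((ρ g).toHomeomorph.continuous).sub continuous_id).continuousOn
  have h0 : (0:ℝ) ∈ Set.uIcc ((fun t => ρ g t - t) x) ((fun t => ρ g t - t) y) := by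
    simp only [Set.mem_uIcc]
    rcases le_total (ρ g x - x) (ρ g y - y) with h | h
    · left; constructor <;> [linarith; linarith]
    · right; constructor <;> [linarith; linarith]
  obtain ⟨z, hz, hz0⟩ := intermediate_value_uIcc hc h0
  exact ⟨z, hz, by linarith [sub_eq_zero.mp hz0] ⟩
lemma pos_or_neg (g : G) (h : ¬ Fp ρ g) : (∀ x, x < ρ g x) ∨ (∀ x, ρ g x < x) := by
  rcases lt_or_gt_of_ne (fun e => h ⟨0, e⟩ : ρ g 0 ≠ 0) with h0 | h0
  · right; intro x
    by_contra hx
    push_neg at hx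
    obtain ⟨z, _, hz⟩ := exists_fixed ρ g hx h0.le
    exact h ⟨z, hz⟩
  · left; intro x
    by_contra hx
    push_neg at hx
    obtain ⟨z, _, hz⟩ := exists_fixed ρ g h0.le hx
    exact h ⟨z, hz⟩
lemma nng_cases {g : G} (hg : Nng ρ g) : Fp ρ g ∨ (∀ x, x < ρ g x) := by
  by_cases hfp : Fp ρ g
  · exact Or.inl hfp
  · rcases pos_or_neg ρ g hfp with h | h
    · exact Or.inr h
    · obtain ⟨x, hx⟩ := hg
      exact absurd (h x) (not_lt.mpr hx)
lemma not_nng_iff {g : G} : ¬ Nng ρ g ↔ ∀ x, ρ g x < x := by unfold Nng; push_neg; rfl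
end basic

section cross
variable (ρ : G →* (ℝ ≃o ℝ)) (hnc : ∀ f g : G, ¬ Crossed (⇑(ρ f)) (⇑(ρ g)))

include hnc in
lemma cross_aux {g h : G} {a b : ℝ} (ha : ρ g a = a) (hb : ρ h b = b)
    (H : ∀ x, x < ρ g (ρ h x)) : False := by
  have hgb : b < ρ g b := by have := H b; rwa [hb] at this
  by_cases hc : ∃ p, ρ g p = p ∧ p ≤ b
  · -- Case A : g has a fixed point ≤ b
    obtain ⟨p₀, hp₀, hp₀b⟩ := hc
    set F : Set ℝ := {z | ρ g z = z} ∩ Set.Iic b with hF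
    have hFne : F.Nonempty := ⟨p₀, hp₀, hp₀b⟩
    have hFbdd : BddAbove F := ⟨b, fun z hz => hz.2⟩
    have hFcl : IsClosed F := (fp_closed ρ g).inter isClosed_Iic
    set p := sSup F with hp
    have hpF : p ∈ F := hFcl.csSup_mem hFne hFbdd
    have hgp : ρ g p = p := hpF.1
    have hpb : p < b := lt_of_le_of_ne hpF.2 (fun e => by rw [e] at hgp; exact hgb.ne' hgp)
    have key : ∀ x ∈ Set.Ioc p b, x < ρ g x := by
      rintro x ⟨hpx, hxb⟩
      rcases lt_trichotomy (ρ g x) x with hlt | heq | hgt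
      · obtain ⟨z, hz, hzfix⟩ := exists_fixed ρ g hgb.le hlt.le
        rw [Set.uIcc_of_ge hxb] at hz
        exact absurd (le_csSup hFbdd ⟨hzfix, hz.2⟩) (not_le.mpr (lt_of_lt_of_le hpx hz.1))
      · exact absurd (le_csSup hFbdd ⟨heq, hxb⟩) (not_le.mpr hpx)
      · exact hgt
    have hhp : p < ρ h p := by
      by_contra hle
      push_neg at hle
      have : ρ g (ρ h p) ≤ ρ g p := (rle ρ g).mpr hle
      rw [hgp] at this
      exact absurd (H p) (not_lt.mpr this)
    set Fh : Set ℝ := {z | ρ h z = z} ∩ Set.Icc p b with hFh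
    have hFhne : Fh.Nonempty := ⟨b, hb, hpb.le, le_refl b⟩
    have hFhbdd : BddBelow Fh := ⟨p, fun z hz => hz.2.1⟩
    have hFhcl : IsClosed Fh := (fp_closed ρ h).inter isClosed_Icc
    set q := sInf Fh with hq
    have hqF : q ∈ Fh := hFhcl.csInf_mem hFhne hFhbdd
    have hhq : ρ h q = q := hqF.1
    have hpq : p < q := lt_of_le_of_ne hqF.2.1 (fun e => by rw [e] at hhp; exact hhp.ne' hhq)
    have key2 : ∀ x ∈ Set.Ioo p q, x < ρ h x := by
      rintro x ⟨hpx, hxq⟩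
      have hxb : x ≤ b := le_trans hxq.le hqF.2.2
      rcases lt_trichotomy (ρ h x) x with hlt | heq | hgt
      · obtain ⟨z, hz, hzfix⟩ := exists_fixed ρ h hhp.le hlt.le
        rw [Set.uIcc_of_le hpx.le] at hz
        have : q ≤ z := csInf_le hFhbdd ⟨hzfix, hz.1, le_trans hz.2 hxb⟩
        exact absurd (lt_of_le_of_lt (this.trans hz.2) hxq) (lt_irrefl q)
      · exact absurd (csInf_le hFhbdd ⟨heq, hpx.le, hxb⟩) (not_le.mpr hxq)
      · exact hgt
    refine hnc g⁻¹ h ⟨p, q, hpq, ?_, hhq, ?_⟩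
    · conv_lhs => rw [← hgp]
      exact rinv ρ g p
    · intro x hx
      refine ⟨?_, key2 x hx⟩
      have hgx : x < ρ g x := key x ⟨hx.1, le_trans hx.2.le hqF.2.2⟩
      have := (rlt ρ g⁻¹).mpr hgx
      rwa [rinv ρ g x] at this
  · -- Case B : all fixed points of g are > b
    push_neg at hc
    set Fg : Set ℝ := {z | ρ g z = z} ∩ Set.Ici b with hFg
    have hFgne : Fg.Nonempty := ⟨a, ha, (hc a ha).le⟩
    have hFgbdd : BddBelow Fg := ⟨b, fun z hz => hz.2⟩
    have hFgcl : IsClosed Fg := (fp_closed ρ g).inter isClosed_Ici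
    set p' := sInf Fg with hp'
    have hp'F : p' ∈ Fg := hFgcl.csInf_mem hFgne hFgbdd
    have hgp' : ρ g p' = p' := hp'F.1
    have hbp' : b < p' := lt_of_le_of_ne hp'F.2 (fun e => by rw [e] at hgb; exact hgb.ne' hgp')
    have key : ∀ x ∈ Set.Ico b p', x < ρ g x := by
      rintro x ⟨hbx, hxp⟩
      rcases lt_trichotomy (ρ g x) x with hlt | heq | hgt
      · obtain ⟨z, hz, hzfix⟩ := exists_fixed ρ g hgb.le hlt.le
        rw [Set.uIcc_of_le hbx] at hz
        have : p' ≤ z := csInf_le hFgbdd ⟨hzfix, hz.1⟩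
        exact absurd (lt_of_le_of_lt (this.trans hz.2) hxp) (lt_irrefl p')
      · exact absurd (csInf_le hFgbdd ⟨heq, hbx⟩) (not_le.mpr hxp)
      · exact hgt
    have hhp' : p' < ρ h p' := by
      by_contra hle
      push_neg at hle
      have : ρ g (ρ h p') ≤ ρ g p' := (rle ρ g).mpr hle
      rw [hgp'] at this
      exact absurd (H p') (not_lt.mpr this)
    set Fh : Set ℝ := {z | ρ h z = z} ∩ Set.Icc b p' with hFh
    have hFhne : Fh.Nonempty := ⟨b, hb, le_refl b, hbp'.le⟩
    have hFhbdd : BddAbove Fh := ⟨p', fun z hz => hz.2.2⟩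
    have hFhcl : IsClosed Fh := (fp_closed ρ h).inter isClosed_Icc
    set q' := sSup Fh with hq'
    have hq'F : q' ∈ Fh := hFhcl.csSup_mem hFhne hFhbdd
    have hhq' : ρ h q' = q' := hq'F.1
    have hq'p' : q' < p' :=
      lt_of_le_of_ne hq'F.2.2 (fun e => by rw [e] at hhq'; exact hhp'.ne' hhq')
    have key2 : ∀ x ∈ Set.Ioo q' p', x < ρ h x := by
      rintro x ⟨hqx, hxp⟩
      have hbx : b ≤ x := le_trans hq'F.2.1 hqx.le
      rcases lt_trichotomy (ρ h x) x with hlt | heq | hgt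
      · obtain ⟨z, hz, hzfix⟩ := exists_fixed ρ h hhp'.le hlt.le
        rw [Set.uIcc_comm, Set.uIcc_of_le hxp.le] at hz
        have : z ≤ q' := le_csSup hFhbdd ⟨hzfix, le_trans hbx hz.1, hz.2⟩
        exact absurd (lt_of_lt_of_le hqx (hz.1.trans this)) (lt_irrefl q')
      · exact absurd (le_csSup hFhbdd ⟨heq, hbx, hxp.le⟩) (not_le.mpr hqx)
      · exact hgt
    refine hnc h⁻¹ g ⟨q', p', hq'p', ?_, hgp', ?_⟩
    · conv_lhs => rw [← hhq']
      exact rinv ρ h q'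
    · intro x hx
      refine ⟨?_, key x ⟨le_trans hq'F.2.1 hx.1.le, hx.2⟩⟩
      have hhx : x < ρ h x := key2 x hx
      have := (rlt ρ h⁻¹).mpr hhx
      rwa [rinv ρ h x] at this

include hnc in
lemma fp_mul {g h : G} (hg : Fp ρ g) (hh : Fp ρ h) : Fp ρ (g * h) := by
  by_contra hnfp
  obtain ⟨a, ha⟩ := hg
  obtain ⟨b, hb⟩ := hh
  rcases pos_or_neg ρ (g*h) hnfp with hpos | hneg
  · exact cross_aux ρ hnc ha hb (fun x => by have := hpos x; rwa [rmul] at this)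
  · have ha' : ρ g⁻¹ a = a := by conv_lhs => rw [← ha]; exact rinv ρ g a
    have hb' : ρ h⁻¹ b = b := by conv_lhs => rw [← hb]; exact rinv ρ h b
    refine cross_aux ρ hnc hb' ha' (fun x => ?_)
    have := hneg (ρ h⁻¹ (ρ g⁻¹ x))
    rw [rmul, rinv' ρ h, rinv' ρ g] at this
    exact this

end cross

section order
variable (ρ : G →* (ℝ ≃o ℝ))

lemma fp_one : Fp ρ (1:G) := ⟨0, rone ρ 0⟩

lemma fp_inv {g : G} (hg : Fp ρ g) : Fp ρ g⁻¹ := by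
  obtain ⟨x, hx⟩ := hg
  exact ⟨x, by conv_lhs => rw [← hx]; exact rinv ρ g x⟩

lemma nng_of_fp {g : G} (hg : Fp ρ g) : Nng ρ g := by
  obtain ⟨x, hx⟩ := hg; exact ⟨x, hx.ge⟩

lemma nng_conj (u : G) {g : G} (hg : Nng ρ g) : Nng ρ (u * g * u⁻¹) := by
  obtain ⟨x, hx⟩ := hg
  refine ⟨ρ u x, ?_⟩
  rw [rmul, rmul, rinv ρ u x]
  exact (rle ρ u).mpr hx

variable (hnc : ∀ f g : G, ¬ Crossed (⇑(ρ f)) (⇑(ρ g)))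

include hnc in
lemma fp_pow {g : G} (hg : Fp ρ g) (k : ℕ) : Fp ρ (g^k) := by
  induction k with
  | zero => simpa using fp_one ρ
  | succ n ih => rw [pow_succ]; exact fp_mul ρ hnc ih hg

include hnc in
lemma nng_mul {g h : G} (hg : Nng ρ g) (hh : Nng ρ h) : Nng ρ (g * h) := by
  rcases nng_cases ρ hg with fg | pg <;> rcases nng_cases ρ hh with fh | ph
  · exact nng_of_fp ρ (fp_mul ρ hnc fg fh)
  · obtain ⟨a, ha⟩ := fg
    refine ⟨ρ h⁻¹ a, ?_⟩
    rw [rmul, rinv' ρ h]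
    have : ρ h⁻¹ a < a := by
      have := (rlt ρ h⁻¹).mpr (ph a)
      rwa [rinv ρ h a] at this
    rw [ha]; exact this.le
  · obtain ⟨b, hb⟩ := fh
    exact ⟨b, by rw [rmul, hb]; exact (pg b).le⟩
  · exact ⟨0, by rw [rmul]; exact ((pg _).trans_le' (ph 0).le).le⟩

/-- The left-invariant total preorder on `G`. -/
def Le (g h : G) : Prop := Nng ρ (g⁻¹ * h)

lemma le_refl' (g : G) : Le ρ g g := by
  unfold Le; rw [inv_mul_cancel]; exact ⟨0, (rone ρ 0).ge⟩

include hnc in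
lemma le_trans' {g h k : G} (h1 : Le ρ g h) (h2 : Le ρ h k) : Le ρ g k := by
  have := nng_mul ρ hnc h1 h2
  unfold Le at *
  have e : (g⁻¹ * h) * (h⁻¹ * k) = g⁻¹ * k := by group
  rwa [e] at this

lemma le_total' (g h : G) : Le ρ g h ∨ Le ρ h g := by
  by_cases h1 : Le ρ g h
  · exact Or.inl h1
  · right
    unfold Le at *
    rw [not_nng_iff] at h1
    refine ⟨ρ (g⁻¹ * h) 0, ?_⟩
    have e : h⁻¹ * g = (g⁻¹ * h)⁻¹ := by group
    rw [e, rinv]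
    exact (h1 0).le

lemma le_mul_left (u : G) {g h : G} (h1 : Le ρ g h) : Le ρ (u*g) (u*h) := by
  unfold Le at *
  have e : (u*g)⁻¹ * (u*h) = g⁻¹ * h := by group
  rwa [e]

lemma le_mul_right (u : G) {g h : G} (h1 : Le ρ g h) : Le ρ (g*u) (h*u) := by
  unfold Le at *
  have := nng_conj ρ u⁻¹ h1
  have e : u⁻¹ * (g⁻¹ * h) * u⁻¹⁻¹ = (g*u)⁻¹ * (h*u) := by group
  rwa [e] at this

include hnc in
lemma le_mul {a b c d : G} (h1 : Le ρ a b) (h2 : Le ρ c d) : Le ρ (a*c) (b*d) :=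
  le_trans' ρ hnc (le_mul_right ρ c h1) (le_mul_left ρ b h2)

include hnc in
lemma le_pow {g h : G} (h1 : Le ρ g h) (k : ℕ) : Le ρ (g^k) (h^k) := by
  induction k with
  | zero => simpa using le_refl' ρ 1
  | succ n ih => rw [pow_succ, pow_succ]; exact le_mul ρ hnc ih h1

end order

section posel
variable (ρ : G →* (ℝ ≃o ℝ)) (f : G) (hf : ∀ x, x < ρ f x)

include hf in
lemma pos_pow (k : ℕ) : ∀ x, x < ρ (f^(k+1)) x := by
  induction k with
  | zero => simpa using hf
  | succ n ih =>
    intro x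
    have e : f^(n+1+1) = f * f^(n+1) := (pow_succ' f (n+1))
    rw [e, rmul]
    exact (ih x).trans (hf _)

include hf in
lemma pos_zpow {m : ℤ} (hm : 0 < m) : ∀ x, x < ρ (f^m) x := by
  intro x
  obtain ⟨n, rfl⟩ : ∃ n : ℕ, m = ((n+1 : ℕ) : ℤ) := by
    refine ⟨(m-1).toNat, by omega⟩
  rw [zpow_natCast]
  exact pos_pow ρ f hf n x

include hf in
lemma nonneg_zpow {m : ℤ} (hm : 0 ≤ m) : ∀ x, x ≤ ρ (f^m) x := by
  rcases eq_or_lt_of_le hm with e | h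
  · intro x; rw [← e, zpow_zero, rone]
  · exact fun x => (pos_zpow ρ f hf h x).le

include hf in
lemma neg_zpow {m : ℤ} (hm : m < 0) : ∀ x, ρ (f^m) x < x := by
  intro x
  have h := pos_zpow ρ f hf (by omega : (0:ℤ) < -m) (ρ (f^m) x)
  have e : ρ (f^(-m)) (ρ (f^m) x) = x := by
    rw [← rmul, ← zpow_add, neg_add_cancel, zpow_zero, rone]
  rwa [e] at h

include hf in
lemma nng_zpow_iff {m : ℤ} : Nng ρ (f^m) ↔ 0 ≤ m := by
  constructor
  · intro hm
    by_contra h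
    push_neg at h
    exact absurd hm ((not_nng_iff ρ).mpr (neg_zpow ρ f hf h))
  · exact fun hm => ⟨0, nonneg_zpow ρ f hf hm 0⟩

include hf in
lemma le_zpow_iff {m m' : ℤ} : Le ρ (f^m) (f^m') ↔ m ≤ m' := by
  unfold Le
  have e : (f^m)⁻¹ * f^m' = f^(-m + m') := by
    rw [← zpow_neg, ← zpow_add]
  rw [e, nng_zpow_iff ρ f hf]
  omega

include hf in
lemma exists_pow_ge (y c : ℝ) : ∃ n : ℕ, c ≤ ρ (f^n) y := by
  by_contra hcon
  push_neg at hcon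
  set u : ℕ → ℝ := fun n => ρ (f^n) y with hu
  have humono : StrictMono u := strictMono_nat_of_lt_succ (fun n => by
    have e : f^(n+1) = f * f^n := pow_succ' f n
    simp only [hu, e, rmul]
    exact hf _)
  have hbdd : BddAbove (Set.range u) := ⟨c, by rintro t ⟨n, rfl⟩; exact (hcon n).le⟩
  have htend : Filter.Tendsto u Filter.atTop (nhds (⨆ n, u n)) :=
    tendsto_atTop_ciSup humono.monotone hbdd
  have htend2 : Filter.Tendsto (fun n => u (n+1)) Filter.atTop (nhds (⨆ n, u n)) :=
    htend.comp (Filter.tendsto_add_atTop_nat 1)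
  have htend3 : Filter.Tendsto (fun n => ρ f (u n)) Filter.atTop (nhds (ρ f (⨆ n, u n))) :=
    ((ρ f).toHomeomorph.continuous.tendsto _).comp htend
  have he : (fun n => ρ f (u n)) = fun n => u (n+1) := by
    funext n
    simp only [hu]
    rw [pow_succ' f n, rmul]
  rw [he] at htend3
  have := tendsto_nhds_unique htend2 htend3
  exact absurd this.symm (hf (⨆ n, u n)).ne'

end posel

section floor
variable (ρ : G →* (ℝ ≃o ℝ)) (hnc : ∀ f g : G, ¬ Crossed (⇑(ρ f)) (⇑(ρ g)))
  (f : G) (hf : ∀ x, x < ρ f x)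

include hnc hf in
lemma floor_ex (g : G) : ∃ m : ℤ, Le ρ (f^m) g ∧ ∀ z : ℤ, Le ρ (f^z) g → z ≤ m := by
  have hne : ∃ z : ℤ, Le ρ (f^z) g := by
    obtain ⟨n, hn⟩ := exists_pow_ge ρ f hf (ρ g 0) 0
    refine ⟨-(n:ℤ), ?_⟩
    unfold Le
    have e : (f^(-(n:ℤ)))⁻¹ * g = f^((n:ℤ)) * g := by
      rw [zpow_neg, inv_inv]
    rw [e]
    refine ⟨0, ?_⟩
    rw [rmul, zpow_natCast]
    exact hn
  have hbdd : ∃ b : ℤ, ∀ z : ℤ, Le ρ (f^z) g → z ≤ b := by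
    obtain ⟨n₁, hn₁⟩ := exists_pow_ge ρ f hf 0 (ρ g 0)
    have key : ∀ z : ℤ, (n₁:ℤ) < z → Le ρ (f^z) g → Fp ρ ((f^z)⁻¹ * g) := by
      intro z hz hle
      rcases nng_cases ρ hle with hfp | hpos
      · exact hfp
      · exfalso
        have h0 := hpos 0
        rw [rmul] at h0
        have h1 : ρ (f^z) 0 < ρ g 0 := by
          have := (rlt ρ (f^z)).mpr h0
          rwa [rinv' ρ (f^z)] at this
        have h2 : ρ (f^(n₁:ℤ)) 0 ≤ ρ (f^z) 0 := by
          have e : ρ (f^z) 0 = ρ (f^(z - n₁)) (ρ (f^(n₁:ℤ)) 0) := by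
            rw [← rmul, ← zpow_add, sub_add_cancel]
          rw [e]
          exact nonneg_zpow ρ f hf (by omega) _
        rw [zpow_natCast] at h2
        exact absurd ((hn₁.trans h2).trans_lt h1) (lt_irrefl _)
    by_cases hex : ∃ z : ℤ, (n₁:ℤ) < z ∧ Le ρ (f^z) g
    · obtain ⟨z₂, hz₂n, hz₂⟩ := hex
      refine ⟨z₂, fun z hz => ?_⟩
      by_contra hcon
      push_neg at hcon
      have fz : Fp ρ ((f^z)⁻¹ * g) := key z (hz₂n.trans hcon) hz
      have fz₂ : Fp ρ ((f^z₂)⁻¹ * g) := key z₂ hz₂n hz₂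
      have : Fp ρ (((f^z₂)⁻¹ * g) * ((f^z)⁻¹ * g)⁻¹) := fp_mul ρ hnc fz₂ (fp_inv ρ fz)
      have e1 : ((f^z₂)⁻¹ * g) * ((f^z)⁻¹ * g)⁻¹ = (f^z₂)⁻¹ * f^z := by group
      have e2 : (f^z₂)⁻¹ * f^z = f^(z - z₂) := by
        rw [← zpow_neg, ← zpow_add]; congr 1; ring
      rw [e1, e2] at this
      obtain ⟨x, hx⟩ := this
      exact absurd hx (pos_zpow ρ f hf (by omega) x).ne'
    · push_neg at hex
      exact ⟨(n₁:ℤ), fun z hz => not_lt.mp (fun hlt => (hex z hlt) hz)⟩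
  obtain ⟨m, hm1, hm2⟩ := Int.exists_greatest_of_bdd hbdd hne
  exact ⟨m, hm1, hm2⟩

/-- The integer `⌊g⌋` relative to `f`. -/
noncomputable def mfl (g : G) : ℤ :=
  (floor_ex ρ hnc f hf g).choose

lemma mfl_le (g : G) : Le ρ (f^(mfl ρ hnc f hf g)) g :=
  (floor_ex ρ hnc f hf g).choose_spec.1

lemma mfl_max (g : G) {z : ℤ} (hz : Le ρ (f^z) g) : z ≤ mfl ρ hnc f hf g :=
  (floor_ex ρ hnc f hf g).choose_spec.2 z hz

lemma mfl_mono {g h : G} (hle : Le ρ g h) : mfl ρ hnc f hf g ≤ mfl ρ hnc f hf h :=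
  mfl_max ρ hnc f hf h (le_trans' ρ hnc (mfl_le ρ hnc f hf g) hle)

lemma mfl_zpow (m : ℤ) : mfl ρ hnc f hf (f^m) = m := by
  refine le_antisymm ?_ ?_
  · exact (le_zpow_iff ρ f hf).mp (mfl_le ρ hnc f hf (f^m))
  · exact mfl_max ρ hnc f hf (f^m) (le_refl' ρ (f^m))

lemma mfl_one : mfl ρ hnc f hf 1 = 0 := by
  have := mfl_zpow ρ hnc f hf 0
  rwa [zpow_zero] at this

lemma mfl_upper (g : G) : Le ρ g (f^(mfl ρ hnc f hf g + 1)) := by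
  rcases le_total' ρ g (f^(mfl ρ hnc f hf g + 1)) with h | h
  · exact h
  · have := mfl_max ρ hnc f hf g h
    omega

lemma mfl_mul_lower (g h : G) :
    mfl ρ hnc f hf g + mfl ρ hnc f hf h ≤ mfl ρ hnc f hf (g*h) := by
  refine mfl_max ρ hnc f hf (g*h) ?_
  have := le_mul ρ hnc (mfl_le ρ hnc f hf g) (mfl_le ρ hnc f hf h)
  rwa [← zpow_add] at this

lemma mfl_mul_upper (g h : G) :
    mfl ρ hnc f hf (g*h) ≤ mfl ρ hnc f hf g + mfl ρ hnc f hf h + 2 := by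
  have h1 : Le ρ (g*h) (f^(mfl ρ hnc f hf g + 1) * f^(mfl ρ hnc f hf h + 1)) :=
    le_mul ρ hnc (mfl_upper ρ hnc f hf g) (mfl_upper ρ hnc f hf h)
  rw [← zpow_add] at h1
  have := mfl_mono ρ hnc f hf h1
  rw [mfl_zpow ρ hnc f hf] at this
  omega

end floor

section tau
open Filter Topology
variable (ρ : G →* (ℝ ≃o ℝ)) (hnc : ∀ f g : G, ¬ Crossed (⇑(ρ f)) (⇑(ρ g)))
  (f : G) (hf : ∀ x, x < ρ f x)

lemma subadd (g : G) : Subadditive (fun k : ℕ => -((mfl ρ hnc f hf (g^k) : ℝ))) := by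
  intro m n
  have h := mfl_mul_lower ρ hnc f hf (g^m) (g^n)
  rw [← pow_add] at h
  have : ((mfl ρ hnc f hf (g^m) : ℝ)) + (mfl ρ hnc f hf (g^n) : ℝ)
      ≤ (mfl ρ hnc f hf (g^(m+n)) : ℝ) := by exact_mod_cast h
  dsimp only
  linarith

lemma akbound (g : G) (k : ℕ) :
    mfl ρ hnc f hf (g^k) ≤ (k:ℤ) * (mfl ρ hnc f hf g + 2) := by
  induction k with
  | zero => simp [pow_zero, mfl_one ρ hnc f hf]
  | succ n ih =>
    have h := mfl_mul_upper ρ hnc f hf (g^n) g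
    rw [← pow_succ] at h
    push_cast
    push_cast at ih
    linarith

lemma bddb (g : G) :
    BddBelow (Set.range fun n : ℕ => (-((mfl ρ hnc f hf (g^n) : ℝ)))/n) := by
  refine ⟨min 0 (-((mfl ρ hnc f hf g : ℝ) + 2)), ?_⟩
  rintro t ⟨n, rfl⟩
  rcases Nat.eq_zero_or_pos n with rfl | hn
  · simp [pow_zero, mfl_one ρ hnc f hf]
  · have h1 : ((mfl ρ hnc f hf (g^n)):ℝ) ≤ (n:ℝ) * ((mfl ρ hnc f hf g : ℝ) + 2) := by
      exact_mod_cast akbound ρ hnc f hf g n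
    have hn' : (0:ℝ) < n := by exact_mod_cast hn
    refine le_trans (min_le_right _ _) ?_
    rw [le_div_iff₀ hn']
    nlinarith

/-- The translation number of `g` relative to `f`. -/
noncomputable def tau (g : G) : ℝ := -(subadd ρ hnc f hf g).lim

lemma tau_tendsto (g : G) :
    Tendsto (fun k : ℕ => ((mfl ρ hnc f hf (g^k) : ℝ))/k) atTop (𝓝 (tau ρ hnc f hf g)) := by
  have h := ((subadd ρ hnc f hf g).tendsto_lim (bddb ρ hnc f hf g)).neg
  refine h.congr (fun k => ?_)
  rw [neg_div, neg_neg]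

lemma tau_unique {g : G} {c : ℝ}
    (h : Tendsto (fun k : ℕ => ((mfl ρ hnc f hf (g^k) : ℝ))/k) atTop (𝓝 c)) :
    tau ρ hnc f hf g = c :=
  tendsto_nhds_unique (tau_tendsto ρ hnc f hf g) h

lemma tau_zpow (m : ℤ) : tau ρ hnc f hf (f^m) = m := by
  refine tau_unique ρ hnc f hf ?_
  have e : ∀ k : ℕ, mfl ρ hnc f hf ((f^m)^k) = m * k := by
    intro k
    rw [← zpow_natCast (f^m) k, ← zpow_mul]
    exact mfl_zpow ρ hnc f hf _
  have : (fun k : ℕ => ((mfl ρ hnc f hf ((f^m)^k) : ℝ))/k) =ᶠ[atTop] (fun _ => (m:ℝ)) := by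
    filter_upwards [eventually_ge_atTop 1] with k hk
    rw [e k]
    have hk' : (k:ℝ) ≠ 0 := by positivity
    push_cast
    field_simp
  exact Tendsto.congr' this.symm tendsto_const_nhds

lemma tau_one : tau ρ hnc f hf 1 = 0 := by
  have := tau_zpow ρ hnc f hf 0
  rw [zpow_zero] at this
  simpa using this

include hnc in
lemma le_aux_pow {g h : G} (hle : Le ρ (h*g) (g*h)) (k : ℕ) :
    Le ρ (h * g^k) (g^k * h) := by
  induction k with
  | zero => simpa using le_refl' ρ h
  | succ n ih =>
    have h1 : Le ρ ((h * g^n) * g) ((g^n * h) * g) := le_mul_right ρ g ih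
    have e1 : (h * g^n) * g = h * g^(n+1) := by rw [pow_succ]; group
    have h2 : Le ρ (g^n * (h * g)) (g^n * (g * h)) := le_mul_left ρ (g^n) hle
    have e2 : (g^n * h) * g = g^n * (h * g) := by group
    have e3 : g^n * (g * h) = g^(n+1) * h := by rw [pow_succ]; group
    rw [e1, e2] at h1
    rw [e3] at h2
    exact le_trans' ρ hnc h1 h2

include hnc in
lemma le_pow_mul {g h : G} (hle : Le ρ (h*g) (g*h)) (k : ℕ) :
    Le ρ ((g*h)^k) (g^k * h^k) := by
  induction k with
  | zero => simpa using le_refl' ρ 1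
  | succ n ih =>
    have h1 : Le ρ ((g*h) * (g*h)^n) ((g*h) * (g^n * h^n)) := le_mul_left ρ (g*h) ih
    have h2 : Le ρ (g * (h * g^n) * h^n) (g * (g^n * h) * h^n) := by
      refine le_mul_right ρ (h^n) ?_
      exact le_mul_left ρ g (le_aux_pow ρ hnc hle n)
    have e1 : (g*h) * (g^n * h^n) = g * (h * g^n) * h^n := by group
    have e2 : (g*h) * (g*h)^n = (g*h)^(n+1) := (pow_succ' (g*h) n).symm
    have e3 : g * (g^n * h) * h^n = g^(n+1) * h^(n+1) := by
      rw [pow_succ', pow_succ']; group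
    rw [e1, e2] at h1
    rw [e3] at h2
    exact le_trans' ρ hnc h1 h2

lemma conj_pow_id (g h : G) (k : ℕ) : (h*g)^(k+1) = h * (g*h)^k * g := by
  induction k with
  | zero => simp
  | succ n ih =>
    have : (h*g)^(n+1+1) = (h*g) * (h*g)^(n+1) := pow_succ' _ _
    rw [this, ih]
    have e : (g*h)^(n+1) = (g*h) * (g*h)^n := pow_succ' _ _
    rw [e]
    set w := (g*h)^n with hw
    group

include hnc in
lemma le_mul_pow {g h : G} (hle : Le ρ (h*g) (g*h)) (k : ℕ) :
    Le ρ (h^k * g^k) ((g*h)^k) := by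
  induction k with
  | zero => simpa using le_refl' ρ 1
  | succ n ih =>
    have h1 : Le ρ (h * (h^n * g^n) * g) (h * (g*h)^n * g) :=
      le_mul_right ρ g (le_mul_left ρ h ih)
    have e1 : h * (h^n * g^n) * g = h^(n+1) * g^(n+1) := by
      rw [pow_succ', pow_succ]; group
    have e2 : h * (g*h)^n * g = (h*g)^(n+1) := (conj_pow_id g h n).symm
    rw [e1, e2] at h1
    exact le_trans' ρ hnc h1 (le_pow ρ hnc hle (n+1))

lemma tau_mul_of_le {g h : G} (hle : Le ρ (h*g) (g*h)) :
    tau ρ hnc f hf (g*h) = tau ρ hnc f hf g + tau ρ hnc f hf h := by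
  have lower : ∀ k : ℕ, mfl ρ hnc f hf (g^k) + mfl ρ hnc f hf (h^k)
      ≤ mfl ρ hnc f hf ((g*h)^k) := by
    intro k
    have h1 := mfl_mul_lower ρ hnc f hf (h^k) (g^k)
    have h2 := mfl_mono ρ hnc f hf (le_mul_pow ρ hnc hle k)
    omega
  have upper : ∀ k : ℕ, mfl ρ hnc f hf ((g*h)^k)
      ≤ mfl ρ hnc f hf (g^k) + mfl ρ hnc f hf (h^k) + 2 := by
    intro k
    have h1 := mfl_mono ρ hnc f hf (le_pow_mul ρ hnc hle k)
    have h2 := mfl_mul_upper ρ hnc f hf (g^k) (h^k)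
    omega
  refine tau_unique ρ hnc f hf ?_
  have hAB : Tendsto (fun k : ℕ => ((mfl ρ hnc f hf (g^k) : ℝ))/k
      + ((mfl ρ hnc f hf (h^k) : ℝ))/k) atTop
      (𝓝 (tau ρ hnc f hf g + tau ρ hnc f hf h)) :=
    (tau_tendsto ρ hnc f hf g).add (tau_tendsto ρ hnc f hf h)
  have hAB2 : Tendsto (fun k : ℕ => ((mfl ρ hnc f hf (g^k) : ℝ))/k
      + ((mfl ρ hnc f hf (h^k) : ℝ))/k + 2/k) atTop
      (𝓝 (tau ρ hnc f hf g + tau ρ hnc f hf h)) := by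
    have := hAB.add (tendsto_const_div_atTop_nhds_zero_nat 2)
    simpa using this
  refine tendsto_of_tendsto_of_tendsto_of_le_of_le' hAB hAB2 ?_ ?_
  · filter_upwards [Filter.eventually_gt_atTop 0] with k hk
    have hk' : (0:ℝ) < k := by exact_mod_cast hk
    rw [← add_div]
    rw [div_le_div_iff_of_pos_right hk']
    exact_mod_cast lower k
  · filter_upwards [Filter.eventually_gt_atTop 0] with k hk
    have hk' : (0:ℝ) < k := by exact_mod_cast hk
    rw [← add_div, ← add_div]
    rw [div_le_div_iff_of_pos_right hk']
    exact_mod_cast upper k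

lemma tau_comm (g h : G) : tau ρ hnc f hf (g*h) = tau ρ hnc f hf (h*g) := by
  have lower : ∀ k : ℕ, mfl ρ hnc f hf ((g*h)^k) + (mfl ρ hnc f hf h + mfl ρ hnc f hf g)
      ≤ mfl ρ hnc f hf ((h*g)^(k+1)) := by
    intro k
    rw [conj_pow_id, mul_assoc]
    have h1 := mfl_mul_lower ρ hnc f hf h ((g*h)^k * g)
    have h2 := mfl_mul_lower ρ hnc f hf ((g*h)^k) g
    omega
  have upper : ∀ k : ℕ, mfl ρ hnc f hf ((h*g)^(k+1))
      ≤ mfl ρ hnc f hf ((g*h)^k) + (mfl ρ hnc f hf h + mfl ρ hnc f hf g + 4) := by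
    intro k
    rw [conj_pow_id, mul_assoc]
    have h1 := mfl_mul_upper ρ hnc f hf h ((g*h)^k * g)
    have h2 := mfl_mul_upper ρ hnc f hf ((g*h)^k) g
    omega
  set c₁ : ℝ := ((mfl ρ hnc f hf h + mfl ρ hnc f hf g : ℤ) : ℝ) with hc₁
  set c₂ : ℝ := ((mfl ρ hnc f hf h + mfl ρ hnc f hf g + 4 : ℤ) : ℝ) with hc₂
  -- the limit of the shifted sequence for h*g
  have hD : Tendsto (fun k : ℕ => ((mfl ρ hnc f hf ((h*g)^(k+1)) : ℝ))/((k:ℝ)+1)) atTop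
      (𝓝 (tau ρ hnc f hf (h*g))) := by
    have := (tau_tendsto ρ hnc f hf (h*g)).comp (tendsto_add_atTop_nat 1)
    refine this.congr (fun k => ?_)
    simp only [Function.comp]
    norm_cast
  -- auxiliary limit: for any real c, ((mfl ((g*h)^k) : ℝ) + c)/(k+1) → tau (g*h)
  have haux : ∀ c : ℝ, Tendsto (fun k : ℕ => (((mfl ρ hnc f hf ((g*h)^k) : ℝ)) + c)/((k:ℝ)+1))
      atTop (𝓝 (tau ρ hnc f hf (g*h))) := by
    intro c
    have h1 : Tendsto (fun k : ℕ => ((mfl ρ hnc f hf ((g*h)^k) : ℝ))/k * ((k:ℝ)/((k:ℝ)+1))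
        + c * (1/((k:ℝ)+1))) atTop (𝓝 (tau ρ hnc f hf (g*h) * 1 + c * 0)) := by
      refine Tendsto.add (Tendsto.mul (tau_tendsto ρ hnc f hf (g*h)) ?_)
        (tendsto_const_nhds.mul tendsto_one_div_add_atTop_nhds_zero_nat)
      exact_mod_cast tendsto_natCast_div_add_atTop (1:ℝ)
    rw [mul_one, mul_zero, add_zero] at h1
    refine h1.congr' ?_
    filter_upwards [Filter.eventually_gt_atTop 0] with k hk
    have hk' : (k:ℝ) ≠ 0 := by positivity
    field_simp
  have hsq : Tendsto (fun k : ℕ => ((mfl ρ hnc f hf ((h*g)^(k+1)) : ℝ))/((k:ℝ)+1)) atTop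
      (𝓝 (tau ρ hnc f hf (g*h))) := by
    refine tendsto_of_tendsto_of_tendsto_of_le_of_le' (haux c₁) (haux c₂) ?_ ?_
    · refine Filter.Eventually.of_forall (fun k => ?_)
      have hk' : (0:ℝ) < (k:ℝ)+1 := by positivity
      rw [div_le_div_iff_of_pos_right hk', hc₁]
      exact_mod_cast lower k
    · refine Filter.Eventually.of_forall (fun k => ?_)
      have hk' : (0:ℝ) < (k:ℝ)+1 := by positivity
      rw [div_le_div_iff_of_pos_right hk', hc₂]
      exact_mod_cast upper k
  exact tendsto_nhds_unique hsq hD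

lemma tau_mul (g h : G) :
    tau ρ hnc f hf (g*h) = tau ρ hnc f hf g + tau ρ hnc f hf h := by
  rcases le_total' ρ (h*g) (g*h) with H | H
  · exact tau_mul_of_le ρ hnc f hf H
  · have h1 : tau ρ hnc f hf (h*g) = tau ρ hnc f hf h + tau ρ hnc f hf g :=
      tau_mul_of_le ρ hnc f hf H
    rw [tau_comm ρ hnc f hf g h, h1]
    ring

lemma tau_inv (g : G) : tau ρ hnc f hf g⁻¹ = - tau ρ hnc f hf g := by
  have := tau_mul ρ hnc f hf g g⁻¹
  rw [mul_inv_cancel, tau_one ρ hnc f hf] at this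
  linarith

lemma mfl_of_fp {u : G} (h : Fp ρ u) : mfl ρ hnc f hf u = 0 := by
  refine le_antisymm ?_ ?_
  · by_contra hcon
    push_neg at hcon
    have h1 : Le ρ (f^(1:ℤ)) u :=
      le_trans' ρ hnc ((le_zpow_iff ρ f hf).mpr (by omega)) (mfl_le ρ hnc f hf u)
    rw [zpow_one] at h1
    rcases nng_cases ρ h1 with hfp | hpos
    · have h2 : Fp ρ ((f⁻¹ * u) * u⁻¹) := fp_mul ρ hnc hfp (fp_inv ρ h)
      have e : (f⁻¹ * u) * u⁻¹ = f⁻¹ := by group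
      rw [e] at h2
      obtain ⟨x, hx⟩ := h2
      have h5 := congrArg (ρ f) hx
      rw [rinv' ρ f x] at h5
      exact absurd h5 (hf x).ne
    · obtain ⟨b, hb⟩ := fp_inv ρ h
      have h3 := hpos (ρ u⁻¹ b)
      rw [rmul, rinv' ρ u, hb] at h3
      have h4 := hf (ρ f⁻¹ b)
      rw [rinv' ρ f] at h4
      exact absurd (h3.trans h4) (lt_irrefl b)
  · refine mfl_max ρ hnc f hf u ?_
    have e : (f^(0:ℤ)) = (1:G) := zpow_zero f
    rw [e]
    unfold Le
    rw [inv_one, one_mul]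
    exact nng_of_fp ρ h

lemma tau_fp {g : G} (h : Fp ρ g) : tau ρ hnc f hf g = 0 := by
  refine tau_unique ρ hnc f hf ?_
  have e : ∀ k : ℕ, mfl ρ hnc f hf (g^k) = 0 := fun k =>
    mfl_of_fp ρ hnc f hf (fp_pow ρ hnc h k)
  have : (fun k : ℕ => ((mfl ρ hnc f hf (g^k) : ℝ))/k) = fun _ => (0:ℝ) := by
    funext k; rw [e k]; simp
  rw [this]
  exact tendsto_const_nhds

lemma neg_pow {g : G} (hg : ∀ x, ρ g x < x) (k : ℕ) : ∀ x, ρ (g^(k+1)) x < x := by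
  induction k with
  | zero => simpa using hg
  | succ n ih =>
    intro x
    have e : g^(n+1+1) = g * g^(n+1) := pow_succ' g (n+1)
    rw [e, rmul]
    exact (hg _).trans (ih x)

lemma tau_neg {g : G} (hg : ∀ x, ρ g x < x) : tau ρ hnc f hf g ≤ 0 := by
  have key : ∀ k : ℕ, 1 ≤ k → mfl ρ hnc f hf (g^k) ≤ 0 := by
    intro k hk
    by_contra hcon
    push_neg at hcon
    have h1 : Le ρ (f^(0:ℤ)) (g^k) :=
      le_trans' ρ hnc ((le_zpow_iff ρ f hf).mpr (by omega)) (mfl_le ρ hnc f hf (g^k))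
    rw [zpow_zero] at h1
    unfold Le at h1
    rw [inv_one, one_mul] at h1
    obtain ⟨x, hx⟩ := h1
    obtain ⟨j, rfl⟩ : ∃ j : ℕ, k = j + 1 := ⟨k - 1, by omega⟩
    exact absurd hx (not_le.mpr (neg_pow ρ hg j x))
  refine le_of_tendsto (tau_tendsto ρ hnc f hf g) ?_
  filter_upwards [Filter.eventually_ge_atTop 1] with k hk
  have hk' : (0:ℝ) ≤ k := by positivity
  have hnum : ((mfl ρ hnc f hf (g^k) : ℝ)) ≤ 0 := by exact_mod_cast key k hk
  first
    | exact div_nonpos_of_nonpos_of_nonneg hnum hk'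
    | exact div_nonpos_iff.mpr (Or.inr ⟨hnum, hk'⟩)
    | exact div_nonpos_iff.mpr (Or.inl ⟨hnum, hk'⟩)

lemma pos_of_tau_pos {g : G} (h : 0 < tau ρ hnc f hf g) : ∀ x, x < ρ g x := by
  by_cases hfp : Fp ρ g
  · exact absurd (tau_fp ρ hnc f hf hfp) (by linarith)
  · rcases pos_or_neg ρ g hfp with hp | hn
    · exact hp
    · exact absurd (tau_neg ρ hnc f hf hn) (by linarith)

lemma tau_le_point {g h : G} (hpt : ρ g 0 ≤ ρ h 0) :
    tau ρ hnc f hf g ≤ tau ρ hnc f hf h := by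
  have h0 : ρ (h⁻¹ * g) 0 ≤ 0 := by
    rw [rmul]
    calc ρ h⁻¹ (ρ g 0) ≤ ρ h⁻¹ (ρ h 0) := (rle ρ h⁻¹).mpr hpt
    _ = 0 := rinv ρ h 0
  have h1 : tau ρ hnc f hf (h⁻¹ * g) ≤ 0 := by
    by_contra hcon
    push_neg at hcon
    have := pos_of_tau_pos ρ hnc f hf hcon 0
    exact absurd (this.trans_le h0) (lt_irrefl 0)
  have h2 : tau ρ hnc f hf (h⁻¹ * g) = - tau ρ hnc f hf h + tau ρ hnc f hf g := by
    rw [tau_mul ρ hnc f hf, tau_inv ρ hnc f hf]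
  linarith

end tau

section phi
open Filter Topology
variable (ρ : G →* (ℝ ≃o ℝ)) (hnc : ∀ f g : G, ¬ Crossed (⇑(ρ f)) (⇑(ρ g)))
  (f : G) (hf : ∀ x, x < ρ f x)

lemma tau_natpow (n : ℕ) : tau ρ hnc f hf (f^n) = n := by
  rw [← zpow_natCast f n, tau_zpow ρ hnc f hf]
  norm_num

/-- The set of translation numbers of elements moving `0` at most to `x`. -/
def Aset (x : ℝ) : Set ℝ := {t | ∃ g : G, ρ g 0 ≤ x ∧ t = tau ρ hnc f hf g}

lemma Aset_nonempty (x : ℝ) : (Aset ρ hnc f hf x).Nonempty := by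
  obtain ⟨n, hn⟩ := exists_pow_ge ρ f hf x 0
  refine ⟨tau ρ hnc f hf ((f^n)⁻¹), (f^n)⁻¹, ?_, rfl⟩
  refine (rle ρ (f^n)).mp ?_
  rw [rinv' ρ (f^n)]
  exact hn

lemma Aset_bddAbove (x : ℝ) : BddAbove (Aset ρ hnc f hf x) := by
  obtain ⟨n, hn⟩ := exists_pow_ge ρ f hf 0 x
  refine ⟨(n:ℝ), ?_⟩
  rintro t ⟨g, hg, rfl⟩
  have h1 : tau ρ hnc f hf g ≤ tau ρ hnc f hf (f^n) :=
    tau_le_point ρ hnc f hf (hg.trans hn)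
  rwa [tau_natpow ρ hnc f hf n] at h1

/-- The semiconjugacy to translations. -/
noncomputable def phi (x : ℝ) : ℝ := sSup (Aset ρ hnc f hf x)

lemma phi_mono : Monotone (phi ρ hnc f hf) := by
  intro x y hxy
  refine csSup_le_csSup (Aset_bddAbove ρ hnc f hf y) (Aset_nonempty ρ hnc f hf x) ?_
  rintro t ⟨g, hg, rfl⟩
  exact ⟨g, hg.trans hxy, rfl⟩

lemma phi_equiv (g : G) (x : ℝ) :
    phi ρ hnc f hf (ρ g x) = tau ρ hnc f hf g + phi ρ hnc f hf x := by
  have himg : Aset ρ hnc f hf (ρ g x)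
      = (fun t => tau ρ hnc f hf g + t) '' Aset ρ hnc f hf x := by
    ext t
    constructor
    · rintro ⟨h, hh, rfl⟩
      refine ⟨tau ρ hnc f hf (g⁻¹ * h), ⟨g⁻¹ * h, ?_, rfl⟩, ?_⟩
      · rw [rmul]
        calc ρ g⁻¹ (ρ h 0) ≤ ρ g⁻¹ (ρ g x) := (rle ρ g⁻¹).mpr hh
        _ = x := rinv ρ g x
      · show tau ρ hnc f hf g + tau ρ hnc f hf (g⁻¹ * h) = tau ρ hnc f hf h
        rw [← tau_mul ρ hnc f hf]
        congr 1
        group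
    · rintro ⟨s, ⟨k, hk, rfl⟩, rfl⟩
      refine ⟨g * k, ?_, (tau_mul ρ hnc f hf g k).symm⟩
      rw [rmul]
      exact (rle ρ g).mpr hk
  unfold phi
  rw [himg]
  refine (Monotone.map_csSup_of_continuousAt ?_ ?_ (Aset_nonempty ρ hnc f hf x)
    (Aset_bddAbove ρ hnc f hf x)).symm
  · exact (continuous_const.add continuous_id).continuousAt
  · exact fun a b hab => by simpa using hab

/-- The right-continuous modification of `phi`. -/
noncomputable def Phi : StieltjesFunction ℝ := (phi_mono ρ hnc f hf).stieltjesFunction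

lemma Phi_eq (x : ℝ) : Phi ρ hnc f hf x = Function.rightLim (phi ρ hnc f hf) x :=
  Monotone.stieltjesFunction_eq _ x

lemma Phi_equiv (g : G) (x : ℝ) :
    Phi ρ hnc f hf (ρ g x) = tau ρ hnc f hf g + Phi ρ hnc f hf x := by
  have hne : ∀ y : ℝ, 𝓝[>] y ≠ ⊥ := fun y => (nhdsGT_neBot y).ne
  rw [Phi_eq, Phi_eq, (phi_mono ρ hnc f hf).rightLim_eq_sInf,
    (phi_mono ρ hnc f hf).rightLim_eq_sInf]
  have h1 : Set.Ioi (ρ g x) = ⇑(ρ g) '' Set.Ioi x := ((ρ g).image_Ioi x).symm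
  rw [h1, ← Set.image_comp]
  have h2 : (phi ρ hnc f hf ∘ ⇑(ρ g)) = (fun t => tau ρ hnc f hf g + t) ∘ phi ρ hnc f hf := by
    funext y
    exact phi_equiv ρ hnc f hf g y
  rw [h2, Set.image_comp]
  refine (Monotone.map_csInf_of_continuousAt ?_ ?_ ?_ ?_).symm
  · exact (continuous_const.add continuous_id).continuousAt
  · exact fun a b hab => by simpa using hab
  · exact ⟨phi ρ hnc f hf (x+1), ⟨x+1, by simp, rfl⟩⟩
  · exact ⟨phi ρ hnc f hf x, by rintro t ⟨y, hy, rfl⟩; exact phi_mono ρ hnc f hf (le_of_lt hy)⟩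

lemma preimage_Ioc (g : G) (a b : ℝ) :
    ⇑(ρ g) ⁻¹' Set.Ioc a b = Set.Ioc (ρ g⁻¹ a) (ρ g⁻¹ b) := by
  ext x
  simp only [Set.mem_preimage, Set.mem_Ioc]
  constructor
  · rintro ⟨h1, h2⟩
    constructor
    · have := (rlt ρ g⁻¹).mpr h1
      rwa [rinv ρ g x] at this
    · have := (rle ρ g⁻¹).mpr h2
      rwa [rinv ρ g x] at this
  · rintro ⟨h1, h2⟩
    constructor
    · have := (rlt ρ g).mpr h1
      rwa [rinv' ρ g a] at this
    · have := (rle ρ g).mpr h2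
      rwa [rinv' ρ g b] at this

end phi
end Sol

open Sol


/-- If `G` acts on the line by order-preserving homeomorphisms, no two elements of `G`
are crossed, and some `T ∈ G` acts freely, then there is a nonzero Radon measure on ℝ
invariant under `G`. -/
theorem noCrossed_invariant_measure {G : Type*} [Group G]
    (ρ : G →* (ℝ ≃o ℝ))
    (hnc : ∀ f g : G, ¬ Crossed (⇑(ρ f)) (⇑(ρ g)))
    (T : G) (hT : ∀ x : ℝ, ρ T x ≠ x) :
    ∃ μ : Measure ℝ, μ ≠ 0 ∧ IsRadon μ ∧
      ∀ g : G, Measure.map (⇑(ρ g)) μ = μ := by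
  have hTnofp : ¬ Fp ρ T := by rintro ⟨x, hx⟩; exact hT x hx
  obtain ⟨f, hf⟩ : ∃ f : G, ∀ x, x < ρ f x := by
    rcases pos_or_neg ρ T hTnofp with hp | hn
    · exact ⟨T, hp⟩
    · refine ⟨T⁻¹, fun x => ?_⟩
      have := hn (ρ T⁻¹ x)
      rwa [rinv' ρ T x] at this
  refine ⟨(Phi ρ hnc f hf).measure, ?_, ?_, ?_⟩
  · -- nonzero
    intro h0
    have h1 : (Phi ρ hnc f hf).measure (Set.Ioc 0 (ρ (f*f) 0))
        = ENNReal.ofReal (Phi ρ hnc f hf (ρ (f*f) 0) - Phi ρ hnc f hf 0) :=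
      StieltjesFunction.measure_Ioc _ _ _
    have htauf : tau ρ hnc f hf f = 1 := by
      have := tau_natpow ρ hnc f hf 1
      rw [pow_one] at this
      simpa using this
    have hup : Phi ρ hnc f hf 0 ≤ 1 := by
      rw [Phi_eq]
      refine le_trans ((phi_mono ρ hnc f hf).rightLim_le (hf 0)) ?_
      refine csSup_le (Aset_nonempty ρ hnc f hf _) ?_
      rintro t ⟨g, hg, rfl⟩
      have := tau_le_point ρ hnc f hf (g := g) (h := f) hg
      rwa [htauf] at this
    have hlow : 2 ≤ Phi ρ hnc f hf (ρ (f*f) 0) := by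
      rw [Phi_eq]
      refine le_trans ?_ ((phi_mono ρ hnc f hf).le_rightLim le_rfl)
      have hmem : tau ρ hnc f hf (f*f) ∈ Aset ρ hnc f hf (ρ (f*f) 0) :=
        ⟨f*f, le_rfl, rfl⟩
      have h2 : tau ρ hnc f hf (f*f) = 2 := by
        rw [tau_mul ρ hnc f hf, htauf]; norm_num
      have := le_csSup (Aset_bddAbove ρ hnc f hf _) hmem
      rw [h2] at this
      exact this
    rw [h0] at h1
    simp only [Measure.coe_zero, Pi.zero_apply] at h1
    have := ENNReal.ofReal_eq_zero.mp h1.symm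
    linarith
  · -- Radon
    intro K hK
    exact hK.measure_lt_top
  · -- invariance
    intro g
    refine (MeasureTheory.Measure.ext_of_Ioc (Phi ρ hnc f hf).measure
      (Measure.map (⇑(ρ g)) (Phi ρ hnc f hf).measure) ?_).symm
    intro a b hab
    have hm : Measurable ⇑(ρ g) := (ρ g).toHomeomorph.measurable
    rw [Measure.map_apply hm measurableSet_Ioc,
      preimage_Ioc ρ g a b, StieltjesFunction.measure_Ioc, StieltjesFunction.measure_Ioc]
    have ea : Phi ρ hnc f hf (ρ g⁻¹ a) = tau ρ hnc f hf g⁻¹ + Phi ρ hnc f hf a :=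
      Phi_equiv ρ hnc f hf g⁻¹ a
    have eb : Phi ρ hnc f hf (ρ g⁻¹ b) = tau ρ hnc f hf g⁻¹ + Phi ρ hnc f hf b :=
      Phi_equiv ρ hnc f hf g⁻¹ b
    rw [ea, eb]
    congr 1
    ring
end

section
/- Let G be a group acting on the real line by order-preserving homeomorphisms. Suppose the action is semi-conjugate to an affine action: there are real numbers a_g > 0 and b_g for each g ∈ G satisfying a_{gh} = a_g·a_h and b_{gh} = a_g·b_h + b_g for all g, h ∈ G, and a non-decreasing map F : ℝ → ℝ whose image is unbounded above and unbounded below, such that F(g(x)) = a_g·F(x) + b_g for all g ∈ G and x ∈ ℝ. Then there exists a nonzero Radon measure μ on ℝ that is quasi-invariant under G: for every g ∈ G there is a real λ_g > 0 such that g_*μ = λ_g·μ, where g_*μ(B) = μ(g⁻¹(B)). -/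
open MeasureTheory

/-- If an action of `G` on the line by order-preserving homeomorphisms is semi-conjugate,
via a non-decreasing map `F` with image unbounded in both directions, to an affine action
`x ↦ a g * x + b g` (with `a g > 0` and the cocycle identities making it an action), then
there is a nonzero Radon measure on ℝ quasi-invariant under `G`. -/
theorem semiconjugate_affine_quasiInvariant_measure {G : Type*} [Group G]
    (ρ : G →* (ℝ ≃o ℝ))
    (a b : G → ℝ) (ha : ∀ g, 0 < a g)
    (hmul_a : ∀ g h : G, a (g * h) = a g * a h)
    (hmul_b : ∀ g h : G, b (g * h) = a g * b h + b g)
    (F : ℝ → ℝ) (hF : Monotone F)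
    (hFabove : ¬ BddAbove (Set.range F)) (hFbelow : ¬ BddBelow (Set.range F))
    (hsc : ∀ (g : G) (x : ℝ), F (ρ g x) = a g * F x + b g) :
    ∃ μ : Measure ℝ, μ ≠ 0 ∧ IsRadon μ ∧
      ∀ g : G, ∃ lam : ℝ, 0 < lam ∧
        Measure.map (⇑(ρ g)) μ = ENNReal.ofReal lam • μ := by
  classical
  have a1 : a 1 = 1 := by
    have h := hmul_a 1 1
    rw [one_mul] at h
    have := ha 1
    nlinarith
  have hainv : ∀ g : G, a g⁻¹ = (a g)⁻¹ := by
    intro g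
    have h := hmul_a g g⁻¹
    rw [mul_inv_cancel, a1] at h
    have h2 : a g⁻¹ * a g = 1 := by linarith
    exact eq_inv_of_mul_eq_one_left h2
  set f := hF.stieltjesFunction with hfdef
  -- key: the right-continuous modification satisfies the same semiconjugacy
  have key : ∀ (g : G) (x : ℝ), f (ρ g x) = a g * f x + b g := by
    intro g x
    have h1 : Filter.Tendsto F (nhdsWithin x (Set.Ioi x)) (nhds (Function.rightLim F x)) :=
      hF.tendsto_rightLim x
    have h2 : Filter.Tendsto (fun t => a g * F t + b g) (nhdsWithin x (Set.Ioi x))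
        (nhds (a g * Function.rightLim F x + b g)) := (h1.const_mul _).add_const _
    have h2' : Filter.Tendsto (fun t => F (ρ g t)) (nhdsWithin x (Set.Ioi x))
        (nhds (a g * Function.rightLim F x + b g)) := by
      refine h2.congr fun t => ?_
      exact (hsc g t).symm
    have hmapnhds : Filter.map (⇑(ρ g)) (nhdsWithin x (Set.Ioi x))
        = nhdsWithin (ρ g x) (Set.Ioi (ρ g x)) := by
      have := ((ρ g).toHomeomorph).isEmbedding.map_nhdsWithin_eq (Set.Ioi x) x
      rw [OrderIso.coe_toHomeomorph, (ρ g).image_Ioi] at this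
      exact this
    have h3 : Filter.Tendsto F (nhdsWithin (ρ g x) (Set.Ioi (ρ g x)))
        (nhds (a g * Function.rightLim F x + b g)) := by
      rw [← hmapnhds, Filter.tendsto_map'_iff]
      exact h2'
    have hne : nhdsWithin (ρ g x) (Set.Ioi (ρ g x)) ≠ ⊥ :=
      (nhdsGT_neBot (ρ g x)).ne'
    have := rightLim_eq_of_tendsto (h := ⟨hne⟩) h3
    simpa [hfdef, Monotone.stieltjesFunction_eq] using this
  have hmono_le : ∀ x : ℝ, F x ≤ f x := fun x => hF.le_rightLim le_rfl
  have hle_mono : ∀ {x y : ℝ}, x < y → f x ≤ F y := fun h => hF.rightLim_le h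
  refine ⟨f.measure, ?_, ?_, ?_⟩
  · -- nonzero
    obtain ⟨y, hy⟩ : ∃ y, F 1 < F y := by
      by_contra h
      push_neg at h
      exact hFabove ⟨F 1, by rintro _ ⟨y, rfl⟩; exact h y⟩
    have h1y : (1 : ℝ) < y := by
      by_contra h
      push_neg at h
      exact absurd (hF h) (not_le.mpr hy)
    have hpos : (0 : ℝ) < f y - f 0 := by
      have h0 : f 0 ≤ F 1 := hle_mono one_pos
      have h1 : F y ≤ f y := hmono_le y
      linarith
    intro h0
    have := f.measure_Ioc 0 y
    rw [h0] at this
    simp only [Measure.coe_zero, Pi.zero_apply] at this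
    rw [eq_comm, ENNReal.ofReal_eq_zero] at this
    linarith
  · -- Radon
    intro K hK
    exact hK.measure_lt_top
  · -- quasi-invariance
    intro g
    refine ⟨(a g)⁻¹, inv_pos.mpr (ha g), ?_⟩
    have hcont : Continuous (⇑(ρ g)) := ((ρ g).toHomeomorph).continuous
    have hsymm : ∀ t : ℝ, (ρ g).symm t = ρ g⁻¹ t := by
      intro t
      have : ρ g⁻¹ = (ρ g)⁻¹ := map_inv ρ g
      rw [this]; rfl
    refine Measure.ext_of_Ioc' _ _ (fun x y _ => ?_) (fun x y hxy => ?_)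
    · rw [Measure.map_apply hcont.measurable measurableSet_Ioc, (ρ g).preimage_Ioc,
        f.measure_Ioc]
      exact ENNReal.ofReal_ne_top
    · rw [Measure.map_apply hcont.measurable measurableSet_Ioc, (ρ g).preimage_Ioc,
        f.measure_Ioc, hsymm, hsymm, key, key]
      have hval : a g⁻¹ * f y + b g⁻¹ - (a g⁻¹ * f x + b g⁻¹) = (a g)⁻¹ * (f y - f x) := by
        rw [hainv]; ring
      rw [hval]
      rw [Measure.smul_apply, f.measure_Ioc, smul_eq_mul,
        ← ENNReal.ofReal_mul (le_of_lt (inv_pos.mpr (ha g)))]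
end

section
/- Let f and g be strictly increasing homeomorphisms of ℝ, let μ be a nonzero Radon measure on ℝ, and let λ_f, λ_g, λ' be positive reals with f_*μ = λ_f·μ, g_*μ = λ_g·μ, and (f∘g)_*μ = λ'·μ, where h_*μ(B) = μ(h⁻¹(B)). Define F_μ : ℝ → ℝ by F_μ(x) = μ([0,x)) for x ≥ 0 and F_μ(x) = −μ([x,0)) for x < 0, and for a homeomorphism h with factor λ_h define the affine map A_h(x) = (1/λ_h)·x + F_μ(h(0)). Then λ' = λ_f·λ_g and for every x ∈ ℝ, (1/λ')·x + F_μ(f(g(0))) = A_f(A_g(x)); that is, the assignment h ↦ A_h is multiplicative: A_{f∘g} = A_f ∘ A_g. -/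
open MeasureTheory

noncomputable def Fmu (μ : Measure ℝ) (x : ℝ) : ℝ :=
  if 0 ≤ x then (μ (Set.Ico 0 x)).toReal else -(μ (Set.Ico x 0)).toReal

lemma ico_lt_top {μ : Measure ℝ} (hrad : IsRadon μ) (a b : ℝ) : μ (Set.Ico a b) < ⊤ :=
  lt_of_le_of_lt (measure_mono Set.Ico_subset_Icc_self) (hrad _ isCompact_Icc)

lemma Fmu_add {μ : Measure ℝ} (hrad : IsRadon μ) {a b : ℝ} (hab : a ≤ b) :
    Fmu μ b = Fmu μ a + (μ (Set.Ico a b)).toReal := by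
  rcases le_or_gt 0 a with ha | ha
  · have hb : (0:ℝ) ≤ b := le_trans ha hab
    have hu : Set.Ico (0:ℝ) a ∪ Set.Ico a b = Set.Ico 0 b :=
      Set.Ico_union_Ico_eq_Ico ha hab
    unfold Fmu
    rw [if_pos hb, if_pos ha, ← hu,
      measure_union (Set.Ico_disjoint_Ico_same) measurableSet_Ico,
      ENNReal.toReal_add (ico_lt_top hrad _ _).ne (ico_lt_top hrad _ _).ne]
  · rcases le_or_gt 0 b with hb | hb
    · have hu : Set.Ico a (0:ℝ) ∪ Set.Ico 0 b = Set.Ico a b :=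
        Set.Ico_union_Ico_eq_Ico ha.le hb
      unfold Fmu
      rw [if_pos hb, if_neg (not_le.mpr ha), ← hu,
        measure_union (Set.Ico_disjoint_Ico_same) measurableSet_Ico,
        ENNReal.toReal_add (ico_lt_top hrad _ _).ne (ico_lt_top hrad _ _).ne]
      ring
    · have hu : Set.Ico a b ∪ Set.Ico b (0:ℝ) = Set.Ico a 0 :=
        Set.Ico_union_Ico_eq_Ico hab hb.le
      unfold Fmu
      rw [if_neg (not_le.mpr hb), if_neg (not_le.mpr (lt_of_le_of_lt hab hb)), ← hu,
        measure_union (Set.Ico_disjoint_Ico_same) measurableSet_Ico,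
        ENNReal.toReal_add (ico_lt_top hrad _ _).ne (ico_lt_top hrad _ _).ne]
      ring

lemma Fmu_map (f : ℝ ≃o ℝ) {μ : Measure ℝ} (hrad : IsRadon μ) {lf : ℝ} (hlf : 0 < lf)
    (hf : Measure.map (⇑f) μ = ENNReal.ofReal lf • μ) (y : ℝ) :
    Fmu μ (f y) = (1 / lf) * Fmu μ y + Fmu μ (f 0) := by
  have hmeas : Measurable (⇑f) := (Homeomorph.measurable f.toHomeomorph)
  have key : ∀ a b : ℝ, (μ (Set.Ico (f a) (f b))).toReal = (1 / lf) * (μ (Set.Ico a b)).toReal := by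
    intro a b
    have hpre : ⇑f ⁻¹' Set.Ico (f a) (f b) = Set.Ico a b := by
      ext x; simp [Set.mem_Ico, f.le_iff_le, f.lt_iff_lt]
    have h1 : μ (Set.Ico a b) = ENNReal.ofReal lf * μ (Set.Ico (f a) (f b)) := by
      rw [← hpre, ← Measure.map_apply hmeas measurableSet_Ico, hf]; rfl
    have h2 := congrArg ENNReal.toReal h1
    rw [ENNReal.toReal_mul, ENNReal.toReal_ofReal hlf.le] at h2
    field_simp at h2 ⊢
    linarith
  rcases le_or_gt 0 y with hy | hy
  · have : Fmu μ (f y) = Fmu μ (f 0) + (μ (Set.Ico (f 0) (f y))).toReal :=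
      Fmu_add hrad (f.le_iff_le.mpr hy)
    rw [this, key 0 y]
    have : Fmu μ y = (μ (Set.Ico 0 y)).toReal := by unfold Fmu; rw [if_pos hy]
    rw [this]; ring
  · have h0 : Fmu μ (f 0) = Fmu μ (f y) + (μ (Set.Ico (f y) (f 0))).toReal :=
      Fmu_add hrad (f.le_iff_le.mpr hy.le)
    have hy' : Fmu μ y = -(μ (Set.Ico y 0)).toReal := by
      unfold Fmu; rw [if_neg (not_le.mpr hy)]
    rw [key y 0] at h0
    rw [hy']; linarith

/-- If `f`, `g` are order-preserving homeomorphisms of ℝ quasi-preserving a nonzero Radon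
measure `μ` with factors `λ_f`, `λ_g`, and `f ∘ g` quasi-preserves `μ` with factor `λ'`,
then `λ' = λ_f * λ_g` and the associated affine maps `A_h(x) = (1/λ_h) x + F_μ(h 0)`
satisfy `A_{f∘g} = A_f ∘ A_g`. -/
theorem affine_assignment_multiplicative (f g : ℝ ≃o ℝ) (μ : Measure ℝ)
    (hμ : μ ≠ 0) (hrad : IsRadon μ)
    (lf lg l' : ℝ) (hlf : 0 < lf) (hlg : 0 < lg) (hl' : 0 < l')
    (hf : Measure.map (⇑f) μ = ENNReal.ofReal lf • μ)
    (hg : Measure.map (⇑g) μ = ENNReal.ofReal lg • μ)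
    (hfg : Measure.map (⇑f ∘ ⇑g) μ = ENNReal.ofReal l' • μ) :
    l' = lf * lg ∧
      ∀ x : ℝ, (1 / l') * x + Fmu μ (f (g 0)) =
        (1 / lf) * ((1 / lg) * x + Fmu μ (g 0)) + Fmu μ (f 0) := by
  have hmf : Measurable (⇑f) := (Homeomorph.measurable f.toHomeomorph)
  have hmg : Measurable (⇑g) := (Homeomorph.measurable g.toHomeomorph)
  -- find a set of positive finite measure
  have hA : ∃ n : ℕ, 0 < μ (Set.Icc (-(n:ℝ)) n) := by
    by_contra h
    push_neg at h
    have h0 : ∀ n : ℕ, μ (Set.Icc (-(n:ℝ)) n) = 0 := fun n => le_antisymm (h n) zero_le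
    have hu : (⋃ n : ℕ, Set.Icc (-(n:ℝ)) n) = Set.univ := by
      ext x
      simp only [Set.mem_iUnion, Set.mem_Icc, Set.mem_univ, iff_true]
      obtain ⟨n, hn⟩ := exists_nat_ge |x|
      exact ⟨n, by cases abs_le.mp hn with | intro h1 h2 => exact ⟨h1, h2⟩⟩
    have : μ Set.univ = 0 := by
      rw [← hu]
      exact measure_iUnion_null h0
    exact hμ (Measure.measure_univ_eq_zero.mp this)
  obtain ⟨n, hn⟩ := hA
  have hfin : μ (Set.Icc (-(n:ℝ)) n) < ⊤ := hrad _ isCompact_Icc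
  have hll : l' = lf * lg := by
    have hcomp : Measure.map (⇑f ∘ ⇑g) μ = ENNReal.ofReal (lf * lg) • μ := by
      rw [← Measure.map_map hmf hmg, hg, Measure.map_smul, hf, smul_smul,
        ← ENNReal.ofReal_mul hlg.le, mul_comm lg lf]
    rw [hcomp] at hfg
    have := congrArg (fun ν : Measure ℝ => ν (Set.Icc (-(n:ℝ)) n)) hfg
    simp only [Measure.smul_apply, smul_eq_mul] at this
    have h2 := congrArg ENNReal.toReal this
    rw [ENNReal.toReal_mul, ENNReal.toReal_mul, ENNReal.toReal_ofReal hl'.le,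
      ENNReal.toReal_ofReal (by positivity)] at h2
    have hne : (μ (Set.Icc (-(n:ℝ)) n)).toReal ≠ 0 :=
      ENNReal.toReal_ne_zero.mpr ⟨hn.ne', hfin.ne⟩
    exact (mul_right_cancel₀ hne h2).symm
  refine ⟨hll, fun x => ?_⟩
  have hF := Fmu_map f hrad hlf hf (g 0)
  rw [hF, hll]
  field_simp
  ring
end

section
/- Let G be a group acting on the real line by order-preserving homeomorphisms and suppose there exists T ∈ G with T(x) ≠ x for all x ∈ ℝ. Then there exists a nonempty closed G-invariant subset Λ ⊆ ℝ that is minimal: every nonempty closed G-invariant subset of Λ is equal to Λ. -/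
private lemma escape_above (g : ℝ ≃o ℝ) (hg : ∀ x, x < g x) (y C : ℝ) :
    ∃ n : ℕ, C < (⇑g)^[n] y := by
  by_contra h
  push_neg at h
  set v : ℕ → ℝ := fun n => (⇑g)^[n] y with hv
  have hsucc : ∀ n, v (n + 1) = g (v n) := fun n => Function.iterate_succ_apply' _ _ _
  have hmono : Monotone v := monotone_nat_of_le_succ fun n => by
    rw [hsucc]; exact (hg (v n)).le
  have hbdd : BddAbove (Set.range v) := ⟨C, by rintro _ ⟨n, rfl⟩; exact h n⟩
  have h1 : Filter.Tendsto v Filter.atTop (nhds (⨆ n, v n)) := tendsto_atTop_ciSup hmono hbdd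
  have h2 : Filter.Tendsto (fun n => v (n + 1)) Filter.atTop (nhds (⨆ n, v n)) :=
    h1.comp (Filter.tendsto_add_atTop_nat 1)
  have h3 : Filter.Tendsto (fun n => g (v n)) Filter.atTop (nhds (g (⨆ n, v n))) :=
    (g.toHomeomorph.continuous.tendsto _).comp h1
  have heq : (fun n => g (v n)) = fun n => v (n + 1) := by
    funext n; rw [hsucc]
  rw [heq] at h3
  have : g (⨆ n, v n) = ⨆ n, v n := tendsto_nhds_unique h3 h2
  exact absurd this (ne_of_gt (hg _))

private lemma escape_below (g : ℝ ≃o ℝ) (hg : ∀ x, g x < x) (y C : ℝ) :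
    ∃ n : ℕ, (⇑g)^[n] y < C := by
  by_contra h
  push_neg at h
  set v : ℕ → ℝ := fun n => (⇑g)^[n] y with hv
  have hsucc : ∀ n, v (n + 1) = g (v n) := fun n => Function.iterate_succ_apply' _ _ _
  have hmono : Antitone v := antitone_nat_of_succ_le fun n => by
    rw [hsucc]; exact (hg (v n)).le
  have hbdd : BddBelow (Set.range v) := ⟨C, by rintro _ ⟨n, rfl⟩; exact h n⟩
  have h1 : Filter.Tendsto v Filter.atTop (nhds (⨅ n, v n)) := tendsto_atTop_ciInf hmono hbdd
  have h2 : Filter.Tendsto (fun n => v (n + 1)) Filter.atTop (nhds (⨅ n, v n)) :=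
    h1.comp (Filter.tendsto_add_atTop_nat 1)
  have h3 : Filter.Tendsto (fun n => g (v n)) Filter.atTop (nhds (g (⨅ n, v n))) :=
    (g.toHomeomorph.continuous.tendsto _).comp h1
  have heq : (fun n => g (v n)) = fun n => v (n + 1) := by
    funext n; rw [hsucc]
  rw [heq] at h3
  have : g (⨅ n, v n) = ⨅ n, v n := tendsto_nhds_unique h3 h2
  exact absurd this (ne_of_lt (hg _))

private lemma pow_apply_eq_iterate_aux {G : Type*} [Group G] (ρ : G →* (ℝ ≃o ℝ)) (S : G) :
    ∀ (n : ℕ) (y : ℝ), ρ (S ^ n) y = (⇑(ρ S))^[n] y := by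
  intro n
  induction n with
  | zero => intro y; simp
  | succ n ih =>
      intro y
      rw [pow_succ, map_mul]
      have : (ρ (S ^ n) * ρ S) y = ρ (S ^ n) (ρ S y) := rfl
      rw [this, ih (ρ S y), ← Function.iterate_succ_apply]

/-- If `G` acts on the line by order-preserving homeomorphisms and some `T ∈ G` acts
freely, then there is a nonempty closed `G`-invariant subset `Λ ⊆ ℝ` that is minimal:
every nonempty closed `G`-invariant subset of `Λ` equals `Λ`. -/
theorem exists_minimal_invariant_set {G : Type*} [Group G]
    (ρ : G →* (ℝ ≃o ℝ)) (T : G) (hT : ∀ x : ℝ, ρ T x ≠ x) :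
    ∃ Λ : Set ℝ, Λ.Nonempty ∧ IsClosed Λ ∧ (∀ g : G, ρ g '' Λ = Λ) ∧
      ∀ Λ' ⊆ Λ, Λ'.Nonempty → IsClosed Λ' → (∀ g : G, ρ g '' Λ' = Λ') → Λ' = Λ := by
  -- Step 1: dichotomy
  have hdich : (∀ x : ℝ, x < ρ T x) ∨ (∀ x : ℝ, ρ T x < x) := by
    by_contra h
    push_neg at h
    obtain ⟨⟨a, ha⟩, ⟨b, hb⟩⟩ := h
    have ha' : ρ T a - a < 0 := sub_neg.2 (lt_of_le_of_ne ha (hT a))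
    have hb' : 0 < ρ T b - b := sub_pos.2 (lt_of_le_of_ne hb fun e => hT b e.symm)
    have hcont : Continuous fun x : ℝ => ρ T x - x :=
      ((ρ T).toHomeomorph.continuous).sub continuous_id
    have h0 : (0 : ℝ) ∈ Set.Icc (ρ T a - a) (ρ T b - b) := ⟨ha'.le, hb'.le⟩
    obtain ⟨x, hx⟩ := intermediate_value_univ a b hcont h0
    exact hT x (by linarith [sub_eq_zero.1 hx])
  obtain ⟨S, hS⟩ : ∃ S : G, ∀ x : ℝ, x < ρ S x := by
    rcases hdich with h | h
    · exact ⟨T, h⟩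
    · refine ⟨T⁻¹, fun x => ?_⟩
      have h2 := h ((ρ T).symm x)
      rw [(ρ T).apply_symm_apply x] at h2
      rw [map_inv]
      exact h2
  set g : ℝ ≃o ℝ := ρ S with hg
  set K : Set ℝ := Set.Icc 0 (g 0) with hK
  have hKcomp : IsCompact K := isCompact_Icc
  -- Step 2: every nonempty invariant set meets K
  have hmeet : ∀ Λ : Set ℝ, Λ.Nonempty → (∀ a : G, ρ a '' Λ = Λ) → (Λ ∩ K).Nonempty := by
    intro Λ ⟨y, hy⟩ hinv
    have hmem : ∀ n : ℤ, ρ (S ^ n) y ∈ Λ := fun n => by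
      rw [← hinv (S ^ n)]; exact ⟨y, hy, rfl⟩
    set u : ℤ → ℝ := fun n => ρ (S ^ n) y with hu
    have hu_succ : ∀ n : ℤ, u (n + 1) = g (u n) := by
      intro n
      have : S ^ (n + 1) = S * S ^ n := by
        rw [add_comm, zpow_add, zpow_one]
      simp only [hu, this, map_mul]
      rfl
    have hu_mono : StrictMono u := strictMono_int_of_lt_succ fun n => by
      rw [hu_succ]; exact hS (u n)
    -- find n with u n > 0
    have hSinv : ∀ x : ℝ, ρ S⁻¹ x < x := fun x => by
      have := hS ((ρ S).symm x)
      rw [(ρ S).apply_symm_apply x] at this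
      rwa [map_inv]
    obtain ⟨n₁, hn₁⟩ := escape_above g hS y 0
    obtain ⟨m₁, hm₁⟩ := escape_below (ρ S⁻¹) hSinv y 0
    have hupos : 0 < u (n₁ : ℤ) := by
      have : u (n₁ : ℤ) = (⇑g)^[n₁] y := by
        simp only [hu, zpow_natCast]
        exact pow_apply_eq_iterate_aux ρ S n₁ y
      rw [this]; exact hn₁
    have huneg : u (-(m₁ : ℤ)) < 0 := by
      have : u (-(m₁ : ℤ)) = (⇑(ρ S⁻¹))^[m₁] y := by
        simp only [hu]
        rw [show (-(m₁ : ℤ)) = ((m₁ : ℤ)) * (-1) by ring, zpow_mul, zpow_neg_one,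
          ← inv_zpow, zpow_natCast]
        exact pow_apply_eq_iterate_aux ρ S⁻¹ m₁ y
      rw [this]; exact hm₁
    -- greatest n with u n ≤ 0
    obtain ⟨n₀, hn₀le, hn₀gr⟩ := Int.exists_greatest_of_bdd
      (P := fun n => u n ≤ 0)
      ⟨n₁, fun z hz => le_of_lt (hu_mono.lt_iff_lt.1 (lt_of_le_of_lt hz hupos))⟩
      ⟨-(m₁ : ℤ), huneg.le⟩
    have hpos : 0 < u (n₀ + 1) := by
      by_contra hc
      push_neg at hc
      exact absurd (hn₀gr _ hc) (by omega)
    have hle : u (n₀ + 1) ≤ g 0 := by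
      rw [hu_succ]; exact g.monotone hn₀le
    exact ⟨u (n₀ + 1), hmem _, hpos.le, hle⟩
  -- Step 3: Zorn's lemma
  set F : Set (Set ℝ) := {Λ | Λ.Nonempty ∧ IsClosed Λ ∧ ∀ a : G, ρ a '' Λ = Λ} with hF
  have huniv : Set.univ ∈ F := by
    refine ⟨⟨0, trivial⟩, isClosed_univ, fun a => ?_⟩
    rw [Set.image_univ]
    exact (ρ a).surjective.range_eq
  have hzorn : ∀ c ⊆ F, IsChain (· ⊆ ·) c → ∃ lb ∈ F, ∀ s ∈ c, lb ⊆ s := by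
    intro c hcF hchain
    rcases c.eq_empty_or_nonempty with rfl | ⟨Λ₀, hΛ₀⟩
    · exact ⟨Set.univ, huniv, by simp⟩
    · refine ⟨⋂₀ c, ⟨?_, ?_, ?_⟩, fun s hs => Set.sInter_subset_of_mem hs⟩
      · -- nonempty via compactness
        haveI : Nonempty c := ⟨⟨Λ₀, hΛ₀⟩⟩
        set t : c → Set ℝ := fun Λ => ↑Λ ∩ K with ht
        have hdir : Directed (· ⊇ ·) t := by
          intro Λ₁ Λ₂
          rcases hchain.total Λ₁.2 Λ₂.2 with h | h
          · exact ⟨Λ₁, le_refl _, Set.inter_subset_inter_left K h⟩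
          · exact ⟨Λ₂, Set.inter_subset_inter_left K h, le_refl _⟩
        have hne : ∀ Λ : c, (t Λ).Nonempty := fun Λ =>
          hmeet Λ (hcF Λ.2).1 (hcF Λ.2).2.2
        have hcomp : ∀ Λ : c, IsCompact (t Λ) := fun Λ =>
          hKcomp.inter_left (hcF Λ.2).2.1
        have hcl : ∀ Λ : c, IsClosed (t Λ) := fun Λ =>
          (hcF Λ.2).2.1.inter isClosed_Icc
        obtain ⟨x, hx⟩ :=
          IsCompact.nonempty_iInter_of_directed_nonempty_isCompact_isClosed t hdir hne hcomp hcl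
        refine ⟨x, fun Λ hΛ => ?_⟩
        exact (Set.mem_iInter.1 hx ⟨Λ, hΛ⟩).1
      · exact isClosed_sInter fun Λ hΛ => (hcF hΛ).2.1
      · -- invariance
        intro a
        ext x
        constructor
        · rintro ⟨w, hw, rfl⟩ Λ hΛ
          rw [← (hcF hΛ).2.2 a]
          exact ⟨w, hw Λ hΛ, rfl⟩
        · intro hx
          refine ⟨(ρ a).symm x, fun Λ hΛ => ?_, (ρ a).apply_symm_apply x⟩
          have hxΛ := hx Λ hΛ
          rw [← (hcF hΛ).2.2 a] at hxΛ
          obtain ⟨w, hwΛ, hwx⟩ := hxΛ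
          have : (ρ a).symm x = w := by rw [← hwx]; exact (ρ a).symm_apply_apply w
          rwa [this]
  obtain ⟨Λ, hΛmin⟩ := zorn_superset F hzorn
  refine ⟨Λ, hΛmin.1.1, hΛmin.1.2.1, hΛmin.1.2.2, ?_⟩
  intro Λ' hsub hne hcl hinv
  exact subset_antisymm hsub (hΛmin.2 ⟨hne, hcl, hinv⟩ hsub)
end

section
/- Let G be a group acting on the real line by order-preserving homeomorphisms such that every G-orbit is dense in ℝ. If there exists f ∈ G with f not the identity such that f has at least one fixed point, then G contains crossed elements: there exist f', g' ∈ G and real numbers a < b with f'(a) = a, g'(b) = b, and f'(x) < x and g'(x) > x for every x ∈ (a,b). -/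
open Set

private lemma oi_pow_apply (e : ℝ ≃o ℝ) : ∀ (n : ℕ) (x : ℝ), (e ^ n) x = e^[n] x := by
  intro n
  induction n with
  | zero => intro x; simp
  | succ k ih =>
      intro x
      rw [pow_succ, Function.iterate_succ, Function.comp_apply]
      exact ih (e x)

/-- IVT fixed point: goes from above the diagonal to below. -/
private lemma fixed_of_ivt (ψ : ℝ → ℝ) (hc : Continuous ψ) {a b : ℝ} (hab : a ≤ b)
    (ha : a < ψ a) (hb : ψ b < b) : ∃ z ∈ Icc a b, ψ z = z := by
  have h := intermediate_value_Icc' hab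
    (Continuous.continuousOn (by continuity : Continuous (fun x => ψ x - x)))
  have h0 : (0:ℝ) ∈ Icc (ψ b - b) (ψ a - a) := ⟨by linarith, by linarith⟩
  obtain ⟨z, hz, hz0⟩ := h h0
  exact ⟨z, hz, by dsimp at hz0; linarith⟩

/-- IVT fixed point: goes from below the diagonal to above. -/
private lemma fixed_of_ivt' (ψ : ℝ → ℝ) (hc : Continuous ψ) {a b : ℝ} (hab : a ≤ b)
    (ha : ψ a < a) (hb : b < ψ b) : ∃ z ∈ Icc a b, ψ z = z := by
  have h := intermediate_value_Icc hab
    (Continuous.continuousOn (by continuity : Continuous (fun x => ψ x - x)))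
  have h0 : (0:ℝ) ∈ Icc (ψ a - a) (ψ b - b) := ⟨by linarith, by linarith⟩
  obtain ⟨z, hz, hz0⟩ := h h0
  exact ⟨z, hz, by dsimp at hz0; linarith⟩

/-- If `f` fixes `a < b` with no fixed points in `(a,b)`, crossed elements exist. -/
private lemma gap_lemma {G : Type*} [Group G] (ρ : G →* (ℝ ≃o ℝ)) (f : G) (a b : ℝ)
    (hab : a < b) (ha : ρ f a = a) (hb : ρ f b = b)
    (hgap : ∀ x ∈ Ioo a b, ρ f x ≠ x) :
    ∃ f' g' : G, Crossed (⇑(ρ f')) (⇑(ρ g')) := by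
  have hinv : ∀ x : ℝ, ρ f⁻¹ x = (ρ f).symm x := by
    intro x; rw [map_inv]; rfl
  have hinva : ρ f⁻¹ a = a := by
    rw [hinv]; exact (ρ f).symm_apply_eq.2 ha.symm
  have hinvb : ρ f⁻¹ b = b := by
    rw [hinv]; exact (ρ f).symm_apply_eq.2 hb.symm
  have hm : (a + b) / 2 ∈ Ioo a b := ⟨by linarith, by linarith⟩
  rcases lt_or_ge (ρ f ((a+b)/2)) ((a+b)/2) with hneg | hpos
  · -- f < id on (a,b)
    have hall : ∀ x ∈ Ioo a b, ρ f x < x := by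
      intro x hx
      rcases lt_or_ge (ρ f x) x with h | h
      · exact h
      have h' : x < ρ f x := lt_of_le_of_ne h (Ne.symm (hgap x hx))
      -- IVT between x and (a+b)/2
      rcases le_or_gt x ((a+b)/2) with hxm | hxm
      · obtain ⟨z, hz, hz0⟩ := fixed_of_ivt (⇑(ρ f)) (ρ f).continuous hxm h' hneg
        exact absurd hz0 (hgap z ⟨lt_of_lt_of_le hx.1 hz.1, lt_of_le_of_lt hz.2 hm.2⟩)
      · obtain ⟨z, hz, hz0⟩ := fixed_of_ivt' (⇑(ρ f)) (ρ f).continuous hxm.le hneg h'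
        exact absurd hz0 (hgap z ⟨lt_of_lt_of_le hm.1 hz.1, lt_of_le_of_lt hz.2 hx.2⟩)
    refine ⟨f, f⁻¹, a, b, hab, ha, hinvb, fun x hx => ⟨hall x hx, ?_⟩⟩
    · -- f⁻¹ x > x
      rw [hinv]
      set y := (ρ f).symm x with hy
      have hxy : ρ f y = x := (ρ f).apply_symm_apply x
      rcases le_or_gt y a with h1 | h1
      · have : ρ f y ≤ ρ f a := (ρ f).monotone h1
        rw [hxy, ha] at this; exact absurd hx.1 (not_lt.2 this)
      rcases lt_or_ge y b with h2 | h2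
      · have := hall y ⟨h1, h2⟩; rw [hxy] at this; exact this
      · have : ρ f b ≤ ρ f y := (ρ f).monotone h2
        rw [hxy, hb] at this
        exact absurd hx.2 (not_lt.2 this)
  · -- f > id on (a,b)
    have hmid : (a+b)/2 < ρ f ((a+b)/2) :=
      lt_of_le_of_ne hpos (Ne.symm (hgap _ hm))
    have hall : ∀ x ∈ Ioo a b, x < ρ f x := by
      intro x hx
      rcases lt_or_ge x (ρ f x) with h | h
      · exact h
      have h' : ρ f x < x := lt_of_le_of_ne h (hgap x hx)
      rcases le_or_gt x ((a+b)/2) with hxm | hxm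
      · obtain ⟨z, hz, hz0⟩ := fixed_of_ivt' (⇑(ρ f)) (ρ f).continuous hxm h' hmid
        exact absurd hz0 (hgap z ⟨lt_of_lt_of_le hx.1 hz.1, lt_of_le_of_lt hz.2 hm.2⟩)
      · obtain ⟨z, hz, hz0⟩ := fixed_of_ivt (⇑(ρ f)) (ρ f).continuous hxm.le hmid h'
        exact absurd hz0 (hgap z ⟨lt_of_lt_of_le hm.1 hz.1, lt_of_le_of_lt hz.2 hx.2⟩)
    refine ⟨f⁻¹, f, a, b, hab, hinva, hb, fun x hx => ⟨?_, hall x hx⟩⟩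
    · rw [hinv]
      set y := (ρ f).symm x with hy
      have hxy : ρ f y = x := (ρ f).apply_symm_apply x
      rcases le_or_gt y a with h1 | h1
      · exact lt_of_le_of_lt h1 hx.1
      rcases lt_or_ge y b with h2 | h2
      · have := hall y ⟨h1, h2⟩; rw [hxy] at this; exact this
      · have : ρ f b ≤ ρ f y := (ρ f).monotone h2
        rw [hxy, hb] at this
        exact absurd hx.2 (not_lt.2 this)

/-- Core case: `f` fixes `u` and pushes everything above `u` strictly down. -/
private lemma core_right {G : Type*} [Group G] (ρ : G →* (ℝ ≃o ℝ))
    (hdense : ∀ x : ℝ, Dense (Set.range fun g : G => ρ g x))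
    (f : G) (u : ℝ) (hfu : ρ f u = u) (hneg : ∀ x, u < x → ρ f x < x) :
    ∃ f' g' : G, Crossed (⇑(ρ f')) (⇑(ρ g')) := by
  obtain ⟨y, ⟨g, rfl⟩, hy⟩ := (hdense u).exists_mem_open isOpen_Ioi (nonempty_Ioi (a := u))
  have hgu : u < ρ g u := hy
  set φ : ℝ ≃o ℝ := ρ f with hφ
  have hiter_gt : ∀ (n : ℕ) (x : ℝ), u < x → u < φ^[n] x := by
    intro n
    induction n with
    | zero => intro x hx; simpa using hx
    | succ m ih =>
        intro x hx
        rw [Function.iterate_succ_apply]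
        have h1 : φ u < φ x := φ.strictMono hx
        rw [hφ, hfu] at h1
        exact ih _ h1
  have hstep : ∀ x : ℝ, u < x → φ x < x := hneg
  set w := u + 1 with hw
  have huw : u < w := by rw [hw]; linarith
  set z := ρ g w with hz
  have hex : ∃ n : ℕ, φ^[n] z < w := by
    rcases le_or_gt z u with h | h
    · exact ⟨0, by simpa using lt_of_le_of_lt h huw⟩
    · set a : ℕ → ℝ := fun n => φ^[n] z with ha
      have hagt : ∀ n, u < a n := fun n => hiter_gt n z h
      have hanti : ∀ n, a (n + 1) < a n := by
        intro n
        have := hstep (a n) (hagt n)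
        show (⇑φ)^[n+1] z < (⇑φ)^[n] z
        rw [Function.iterate_succ_apply']
        exact this
      have hbdd : BddBelow (Set.range a) := by
        refine ⟨u, ?_⟩
        rintro _ ⟨n, rfl⟩
        exact (hagt n).le
      set L := ⨅ n, a n with hL
      have hLu : u ≤ L := le_ciInf fun n => (hagt n).le
      have hφL : φ L = L := by
        have h1 : φ L = ⨅ n, φ (a n) := φ.map_ciInf hbdd
        have h2 : ∀ n, φ (a n) = a (n + 1) := by
          intro n
          rw [ha]
          exact (Function.iterate_succ_apply' (⇑φ) n z).symm
        rw [h1]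
        simp_rw [h2]
        have hbdd' : BddBelow (Set.range fun n => a (n + 1)) := by
          refine ⟨u, ?_⟩
          rintro _ ⟨n, rfl⟩
          exact (hagt (n + 1)).le
        apply le_antisymm
        · refine le_ciInf fun m => ?_
          exact le_trans (ciInf_le hbdd' m) (hanti m).le
        · refine le_ciInf fun m => ciInf_le hbdd (m + 1)
      have hLeq : L = u := by
        rcases eq_or_lt_of_le hLu with h' | h'
        · exact h'.symm
        · exact absurd hφL (ne_of_lt (hstep L h'))
      by_contra hall
      push_neg at hall
      have : w ≤ L := le_ciInf fun n => hall n
      rw [hLeq] at this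
      exact absurd huw (not_lt.2 this)
  obtain ⟨n, hn⟩ := hex
  set k := f ^ n * g with hk
  have hkapp : ∀ x : ℝ, ρ k x = φ^[n] (ρ g x) := by
    intro x
    rw [hk, map_mul, map_pow]
    exact oi_pow_apply φ n (ρ g x)
  have hku : u < ρ k u := by rw [hkapp]; exact hiter_gt n _ hgu
  have hkw : ρ k w < w := by rw [hkapp]; exact hn
  set S := Icc u w ∩ {x : ℝ | ρ k x = x} with hS
  have hSclosed : IsClosed S :=
    isClosed_Icc.inter (isClosed_eq (ρ k).continuous continuous_id)
  have hSne : S.Nonempty := by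
    obtain ⟨c, hc, hc0⟩ := fixed_of_ivt (⇑(ρ k)) (ρ k).continuous huw.le hku hkw
    exact ⟨c, hc, hc0⟩
  have hSbdd : BddBelow S := bddBelow_Icc.mono inter_subset_left
  set c := sInf S with hc
  have hcS : c ∈ S := hSclosed.csInf_mem hSne hSbdd
  have hkc : ρ k c = c := hcS.2
  have hcu : u < c := by
    rcases eq_or_lt_of_le hcS.1.1 with h' | h'
    · exact absurd hkc (by rw [← h']; exact ne_of_gt hku)
    · exact h'
  have hclaim : ∀ x ∈ Ioo u c, x < ρ k x := by
    intro x hx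
    by_contra hle
    push_neg at hle
    have hxw : x ≤ w := le_trans hx.2.le hcS.1.2
    rcases eq_or_lt_of_le hle with h' | h'
    · have hmem : x ∈ S := ⟨⟨hx.1.le, hxw⟩, h'⟩
      have h2 : c ≤ x := by rw [hc]; exact csInf_le hSbdd hmem
      exact absurd h2 (not_le.2 hx.2)
    · obtain ⟨z', hz', hz0⟩ := fixed_of_ivt (⇑(ρ k)) (ρ k).continuous hx.1.le hku h'
      have hmem : z' ∈ S := ⟨⟨hz'.1, le_trans hz'.2 hxw⟩, hz0⟩
      have h2 : c ≤ z' := by rw [hc]; exact csInf_le hSbdd hmem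
      exact lt_irrefl c (lt_of_le_of_lt (le_trans h2 hz'.2) hx.2)
  exact ⟨f, k, u, c, hcu, hfu, hkc, fun x hx => ⟨hneg x hx.1, hclaim x hx⟩⟩


/-- Mirror core case: `f` fixes `v` and pushes everything below `v` strictly up. -/
private lemma core_left {G : Type*} [Group G] (ρ : G →* (ℝ ≃o ℝ))
    (hdense : ∀ x : ℝ, Dense (Set.range fun g : G => ρ g x))
    (f : G) (v : ℝ) (hfv : ρ f v = v) (hpos : ∀ x, x < v → x < ρ f x) :
    ∃ f' g' : G, Crossed (⇑(ρ f')) (⇑(ρ g')) := by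
  obtain ⟨y, ⟨g, rfl⟩, hy⟩ := (hdense v).exists_mem_open isOpen_Iio (nonempty_Iio (a := v))
  have hgv : ρ g v < v := hy
  set φ : ℝ ≃o ℝ := ρ f with hφ
  have hiter_lt : ∀ (n : ℕ) (x : ℝ), x < v → φ^[n] x < v := by
    intro n
    induction n with
    | zero => intro x hx; simpa using hx
    | succ m ih =>
        intro x hx
        rw [Function.iterate_succ_apply]
        have h1 : φ x < φ v := φ.strictMono hx
        rw [hφ, hfv] at h1
        exact ih _ h1
  have hstep : ∀ x : ℝ, x < v → x < φ x := hpos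
  set w := v - 1 with hw
  have hwv : w < v := by rw [hw]; linarith
  set z := ρ g w with hz
  have hex : ∃ n : ℕ, w < φ^[n] z := by
    rcases le_or_gt v z with h | h
    · exact ⟨0, by simpa using lt_of_lt_of_le hwv h⟩
    · set a : ℕ → ℝ := fun n => φ^[n] z with ha
      have halt : ∀ n, a n < v := fun n => hiter_lt n z h
      have hmono : ∀ n, a n < a (n + 1) := by
        intro n
        have := hstep (a n) (halt n)
        show (⇑φ)^[n] z < (⇑φ)^[n+1] z
        rw [Function.iterate_succ_apply']
        exact this
      have hbdd : BddAbove (Set.range a) := by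
        refine ⟨v, ?_⟩
        rintro _ ⟨n, rfl⟩
        exact (halt n).le
      set L := ⨆ n, a n with hL
      have hLv : L ≤ v := ciSup_le fun n => (halt n).le
      have hφL : φ L = L := by
        have h1 : φ L = ⨆ n, φ (a n) := φ.map_ciSup hbdd
        have h2 : ∀ n, φ (a n) = a (n + 1) := by
          intro n
          show φ ((⇑φ)^[n] z) = (⇑φ)^[n+1] z
          exact (Function.iterate_succ_apply' (⇑φ) n z).symm
        rw [h1]
        simp_rw [h2]
        have hbdd' : BddAbove (Set.range fun n => a (n + 1)) := by
          refine ⟨v, ?_⟩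
          rintro _ ⟨n, rfl⟩
          exact (halt (n + 1)).le
        apply le_antisymm
        · refine ciSup_le fun m => le_ciSup hbdd (m + 1)
        · refine ciSup_le fun m => le_trans (hmono m).le (le_ciSup hbdd' m)
      have hLeq : L = v := by
        rcases eq_or_lt_of_le hLv with h' | h'
        · exact h'
        · exact absurd hφL (ne_of_gt (hstep L h'))
      by_contra hall
      push_neg at hall
      have : L ≤ w := ciSup_le fun n => hall n
      rw [hLeq] at this
      exact absurd hwv (not_lt.2 this)
  obtain ⟨n, hn⟩ := hex
  set k := f ^ n * g with hk
  have hkapp : ∀ x : ℝ, ρ k x = φ^[n] (ρ g x) := by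
    intro x
    rw [hk, map_mul, map_pow]
    exact oi_pow_apply φ n (ρ g x)
  have hkv : ρ k v < v := by rw [hkapp]; exact hiter_lt n _ hgv
  have hkw : w < ρ k w := by rw [hkapp]; exact hn
  set S := Icc w v ∩ {x : ℝ | ρ k x = x} with hS
  have hSclosed : IsClosed S :=
    isClosed_Icc.inter (isClosed_eq (ρ k).continuous continuous_id)
  have hSne : S.Nonempty := by
    obtain ⟨c, hc, hc0⟩ := fixed_of_ivt (⇑(ρ k)) (ρ k).continuous hwv.le hkw hkv
    exact ⟨c, hc, hc0⟩
  have hSbdd : BddAbove S := bddAbove_Icc.mono inter_subset_left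
  set c := sSup S with hc
  have hcS : c ∈ S := hSclosed.csSup_mem hSne hSbdd
  have hkc : ρ k c = c := hcS.2
  have hcv : c < v := by
    rcases eq_or_lt_of_le hcS.1.2 with h' | h'
    · exact absurd hkc (by rw [h']; exact ne_of_lt hkv)
    · exact h'
  have hclaim : ∀ x ∈ Ioo c v, ρ k x < x := by
    intro x hx
    by_contra hle
    push_neg at hle
    have hwx : w ≤ x := le_trans hcS.1.1 hx.1.le
    rcases eq_or_lt_of_le hle with h' | h'
    · have hmem : x ∈ S := ⟨⟨hwx, hx.2.le⟩, h'.symm⟩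
      have h2 : x ≤ c := by rw [hc]; exact le_csSup hSbdd hmem
      exact absurd h2 (not_le.2 hx.1)
    · obtain ⟨z', hz', hz0⟩ := fixed_of_ivt (⇑(ρ k)) (ρ k).continuous hx.2.le h' hkv
      have hmem : z' ∈ S := ⟨⟨le_trans hwx hz'.1, hz'.2⟩, hz0⟩
      have h2 : z' ≤ c := by rw [hc]; exact le_csSup hSbdd hmem
      exact lt_irrefl c (lt_of_lt_of_le (lt_of_lt_of_le hx.1 hz'.1) h2)
  exact ⟨k, f, c, v, hcv, hkc, hfv, fun x hx => ⟨hclaim x hx, hpos x hx.2⟩⟩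


/-- If `G` acts on the line by order-preserving homeomorphisms with all orbits dense, and
some `f ∈ G` acts nontrivially but has a fixed point, then `G` contains crossed elements. -/
theorem minimal_action_crossed_elements {G : Type*} [Group G]
    (ρ : G →* (ℝ ≃o ℝ))
    (hdense : ∀ x : ℝ, Dense (Set.range fun g : G => ρ g x))
    (f : G) (hf : ∃ x : ℝ, ρ f x ≠ x) (hfix : ∃ y : ℝ, ρ f y = y) :
    ∃ f' g' : G, Crossed (⇑(ρ f')) (⇑(ρ g')) := by
  obtain ⟨x₁, hx₁⟩ := hf
  obtain ⟨y₀, hy₀⟩ := hfix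
  set F := {x : ℝ | ρ f x = x} with hF
  have hFclosed : IsClosed F := isClosed_eq (ρ f).continuous continuous_id
  have hinv : ∀ x : ℝ, ρ f⁻¹ x = (ρ f).symm x := fun x => by rw [map_inv]; rfl
  have hinvfix : ∀ x : ℝ, ρ f x = x → ρ f⁻¹ x = x := fun x h => by
    rw [hinv]; exact (ρ f).symm_apply_eq.2 h.symm
  by_cases hA : ∃ p ∈ F, x₁ < p
  · by_cases hB : ∃ q ∈ F, q < x₁
    · -- fixed points on both sides of x₁ : bounded gap
      obtain ⟨p, hpF, hpx⟩ := hA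
      obtain ⟨q, hqF, hqx⟩ := hB
      set A := F ∩ Icc q x₁ with hAdef
      have hAcl : IsClosed A := hFclosed.inter isClosed_Icc
      have hAne : A.Nonempty := ⟨q, hqF, le_refl q, hqx.le⟩
      have hAbdd : BddAbove A := bddAbove_Icc.mono inter_subset_right
      set a := sSup A with hadef
      have haA : a ∈ A := hAcl.csSup_mem hAne hAbdd
      have hax : a < x₁ := lt_of_le_of_ne haA.2.2 (fun h => hx₁ (by rw [← h]; exact haA.1))
      set B := F ∩ Icc x₁ p with hBdef
      have hBcl : IsClosed B := hFclosed.inter isClosed_Icc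
      have hBne : B.Nonempty := ⟨p, hpF, hpx.le, le_refl p⟩
      have hBbdd : BddBelow B := bddBelow_Icc.mono inter_subset_right
      set b := sInf B with hbdef
      have hbB : b ∈ B := hBcl.csInf_mem hBne hBbdd
      have hxb : x₁ < b := lt_of_le_of_ne hbB.2.1 (fun h => hx₁ (by rw [h]; exact hbB.1))
      have hgap : ∀ x ∈ Ioo a b, ρ f x ≠ x := by
        intro x hx hfx
        rcases le_or_gt x x₁ with h | h
        · have hqa : q ≤ a := by rw [hadef]; exact le_csSup hAbdd ⟨hqF, le_refl q, hqx.le⟩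
          have hmem : x ∈ A := ⟨hfx, le_trans hqa hx.1.le, h⟩
          have : a < a := lt_of_lt_of_le hx.1 (by rw [hadef]; exact le_csSup hAbdd hmem)
          exact lt_irrefl a this
        · have hbp : b ≤ p := by rw [hbdef]; exact csInf_le hBbdd ⟨hpF, hpx.le, le_refl p⟩
          have hmem : x ∈ B := ⟨hfx, h.le, le_trans hx.2.le hbp⟩
          have : b < b := lt_of_le_of_lt (by rw [hbdef]; exact csInf_le hBbdd hmem) hx.2
          exact lt_irrefl b this
      exact gap_lemma ρ f a b (lt_trans hax hxb) haA.1 hbB.1 hgap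
    · -- all fixed points are ≥ x₁ : bounded below case
      push_neg at hB
      have hFne : F.Nonempty := ⟨y₀, hy₀⟩
      have hFbdd : BddBelow F := ⟨x₁, fun q hq => hB q hq⟩
      set v := sInf F with hvdef
      have hvF : v ∈ F := hFclosed.csInf_mem hFne hFbdd
      have hbelow : ∀ x, x < v → ρ f x ≠ x := by
        intro x hx hfx
        have : v ≤ x := by rw [hvdef]; exact csInf_le hFbdd hfx
        exact absurd hx (not_lt.2 this)
      by_cases hsign : ∀ x, x < v → x < ρ f x
      · exact core_left ρ hdense f v hvF hsign
      · push_neg at hsign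
        obtain ⟨x₀, hx₀v, hx₀le⟩ := hsign
        have hx₀ : ρ f x₀ < x₀ := lt_of_le_of_ne hx₀le (hbelow x₀ hx₀v)
        have hallneg : ∀ x, x < v → ρ f x < x := by
          intro x hxv
          rcases lt_or_ge (ρ f x) x with h | h
          · exact h
          have h' : x < ρ f x := lt_of_le_of_ne h (Ne.symm (hbelow x hxv))
          rcases le_or_gt x x₀ with hc | hc
          · obtain ⟨z, hz, hz0⟩ := fixed_of_ivt (⇑(ρ f)) (ρ f).continuous hc h' hx₀
            exact absurd hz0 (hbelow z (lt_of_le_of_lt hz.2 hx₀v))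
          · obtain ⟨z, hz, hz0⟩ := fixed_of_ivt' (⇑(ρ f)) (ρ f).continuous hc.le hx₀ h'
            exact absurd hz0 (hbelow z (lt_of_le_of_lt hz.2 hxv))
        refine core_left ρ hdense f⁻¹ v (hinvfix v hvF) ?_
        intro x hxv
        rw [hinv]
        set yy := (ρ f).symm x with hyy
        have hxy : ρ f yy = x := (ρ f).apply_symm_apply x
        rcases lt_or_ge yy v with h1 | h1
        · have := hallneg yy h1
          rw [hxy] at this
          exact this
        · have : ρ f v ≤ ρ f yy := (ρ f).monotone h1
          rw [hxy, hvF] at this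
          exact absurd hxv (not_lt.2 this)
  · -- all fixed points are ≤ x₁ : bounded above case
    push_neg at hA
    have hFne : F.Nonempty := ⟨y₀, hy₀⟩
    have hFbdd : BddAbove F := ⟨x₁, fun q hq => hA q hq⟩
    set u := sSup F with hudef
    have huF : u ∈ F := hFclosed.csSup_mem hFne hFbdd
    have habove : ∀ x, u < x → ρ f x ≠ x := by
      intro x hx hfx
      have : x ≤ u := by rw [hudef]; exact le_csSup hFbdd hfx
      exact absurd hx (not_lt.2 this)
    by_cases hsign : ∀ x, u < x → ρ f x < x
    · exact core_right ρ hdense f u huF hsign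
    · push_neg at hsign
      obtain ⟨x₀, hx₀u, hx₀le⟩ := hsign
      have hx₀ : x₀ < ρ f x₀ := lt_of_le_of_ne hx₀le (Ne.symm (habove x₀ hx₀u))
      have hallpos : ∀ x, u < x → x < ρ f x := by
        intro x hxu
        rcases lt_or_ge x (ρ f x) with h | h
        · exact h
        have h' : ρ f x < x := lt_of_le_of_ne h (habove x hxu)
        rcases le_or_gt x x₀ with hc | hc
        · obtain ⟨z, hz, hz0⟩ := fixed_of_ivt' (⇑(ρ f)) (ρ f).continuous hc h' hx₀
          exact absurd hz0 (habove z (lt_of_lt_of_le hxu hz.1))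
        · obtain ⟨z, hz, hz0⟩ := fixed_of_ivt (⇑(ρ f)) (ρ f).continuous hc.le hx₀ h'
          exact absurd hz0 (habove z (lt_of_lt_of_le hx₀u hz.1))
      refine core_right ρ hdense f⁻¹ u (hinvfix u huF) ?_
      intro x hxu
      rw [hinv]
      set yy := (ρ f).symm x with hyy
      have hxy : ρ f yy = x := (ρ f).apply_symm_apply x
      rcases lt_or_ge u yy with h1 | h1
      · have := hallpos yy h1
        rw [hxy] at this
        exact this
      · have : ρ f yy ≤ ρ f u := (ρ f).monotone h1
        rw [hxy, huF] at this
        exact absurd hxu (not_lt.2 this)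
end

section
/- Let G be a group acting on the real line by order-preserving homeomorphisms, let H be a normal subgroup of G, and let T ∈ G satisfy T(x) ≠ x for all x ∈ ℝ. Assume that H has no global fixed point (no point x ∈ ℝ satisfies h(x) = x for all h ∈ H), but that every element of H has at least one fixed point. Then H contains crossed elements: there exist f, g ∈ H and real numbers a < b with f(a) = a, g(b) = b, and f(x) < x and g(x) > x for every x ∈ (a,b). -/
open Set

private lemma rho_mul {G : Type*} [Group G] (ρ : G →* (ℝ ≃o ℝ)) (g h : G) (x : ℝ) :
    ρ (g * h) x = ρ g (ρ h x) := by rw [map_mul]; rfl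

private lemma rho_inv_fun {G : Type*} [Group G] (ρ : G →* (ℝ ≃o ℝ)) (h : G) (x : ℝ) :
    ρ h⁻¹ x = (ρ h).symm x := by rw [map_inv]; rfl

private lemma rho_inv_apply {G : Type*} [Group G] (ρ : G →* (ℝ ≃o ℝ)) (g : G) (x : ℝ) :
    ρ g (ρ g⁻¹ x) = x := by
  rw [← rho_mul, mul_inv_cancel, map_one]; rfl

private lemma rho_inv_apply' {G : Type*} [Group G] (ρ : G →* (ℝ ≃o ℝ)) (g : G) (x : ℝ) :
    ρ g⁻¹ (ρ g x) = x := by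
  rw [← rho_mul, inv_mul_cancel, map_one]; rfl

private lemma inv_fix {G : Type*} [Group G] (ρ : G →* (ℝ ≃o ℝ)) (h : G) {y : ℝ}
    (hy : ρ h y = y) : ρ h⁻¹ y = y := by
  conv_lhs => rw [← hy]
  exact rho_inv_apply' ρ h y

private lemma flip_lt {G : Type*} [Group G] (ρ : G →* (ℝ ≃o ℝ)) (h : G) {x : ℝ}
    (hx : ρ h x < x) : x < ρ h⁻¹ x := by
  have := (ρ h).symm.strictMono hx
  rw [(ρ h).symm_apply_apply] at this
  rwa [rho_inv_fun]

private lemma flip_gt {G : Type*} [Group G] (ρ : G →* (ℝ ≃o ℝ)) (h : G) {x : ℝ}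
    (hx : x < ρ h x) : ρ h⁻¹ x < x := by
  have := (ρ h).symm.strictMono hx
  rw [(ρ h).symm_apply_apply] at this
  rwa [rho_inv_fun]

private lemma fix_closed (f : ℝ ≃o ℝ) : IsClosed {x : ℝ | f x = x} :=
  isClosed_eq f.continuous continuous_id

private lemma ivt_fix (f : ℝ ≃o ℝ) {u v : ℝ} (huv : u ≤ v) (hu : u ≤ f u) (hv : f v ≤ v) :
    ∃ w ∈ Set.Icc u v, f w = w := by
  have hc : ContinuousOn (fun x => f x - x) (Icc u v) :=
    (f.continuous.sub continuous_id).continuousOn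
  have h0 : (0:ℝ) ∈ Icc (f v - v) (f u - u) := ⟨by linarith, by linarith⟩
  obtain ⟨w, hw, hw0⟩ := intermediate_value_Icc' huv hc h0
  refine ⟨w, hw, ?_⟩
  simp only at hw0
  linarith

private lemma sign_core (f : ℝ ≃o ℝ) {x y : ℝ} (hx : x ≤ f x) (hy : f y ≤ y) :
    ∃ w ∈ Set.Icc (min x y) (max x y), f w = w := by
  rcases le_total x y with h | h
  · obtain ⟨w, hw, hfw⟩ := ivt_fix f h hx hy
    exact ⟨w, by rwa [min_eq_left h, max_eq_right h], hfw⟩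
  · have hx' : f.symm x ≤ x := by
      have := f.symm.monotone hx
      rwa [f.symm_apply_apply] at this
    have hy' : y ≤ f.symm y := by
      have := f.symm.monotone hy
      rwa [f.symm_apply_apply] at this
    obtain ⟨w, hw, hfw⟩ := ivt_fix f.symm h hy' hx'
    refine ⟨w, by rwa [min_eq_right h, max_eq_left h], ?_⟩
    have := congrArg f hfw
    rw [f.apply_symm_apply] at this
    exact this.symm

private lemma sign_Ioo (f : ℝ ≃o ℝ) {a b : ℝ} (hfpf : ∀ x, a < x → x < b → f x ≠ x) :
    (∀ x, a < x → x < b → f x < x) ∨ (∀ x, a < x → x < b → x < f x) := by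
  by_contra hcon
  push_neg at hcon
  obtain ⟨⟨x, hax, hxb, hx⟩, ⟨y, hay, hyb, hy⟩⟩ := hcon
  obtain ⟨w, hw, hfw⟩ := sign_core f hx hy
  exact hfpf w (lt_of_lt_of_le (lt_min hax hay) hw.1)
    (lt_of_le_of_lt hw.2 (max_lt hxb hyb)) hfw

private lemma sign_Ioi (f : ℝ ≃o ℝ) {a : ℝ} (hfpf : ∀ x, a < x → f x ≠ x) :
    (∀ x, a < x → f x < x) ∨ (∀ x, a < x → x < f x) := by
  by_contra hcon
  push_neg at hcon
  obtain ⟨⟨x, hax, hx⟩, ⟨y, hay, hy⟩⟩ := hcon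
  obtain ⟨w, hw, hfw⟩ := sign_core f hx hy
  exact hfpf w (lt_of_lt_of_le (lt_min hax hay) hw.1) hfw

private lemma sign_Iio (f : ℝ ≃o ℝ) {a : ℝ} (hfpf : ∀ x, x < a → f x ≠ x) :
    (∀ x, x < a → f x < x) ∨ (∀ x, x < a → x < f x) := by
  by_contra hcon
  push_neg at hcon
  obtain ⟨⟨x, hax, hx⟩, ⟨y, hay, hy⟩⟩ := hcon
  obtain ⟨w, hw, hfw⟩ := sign_core f hx hy
  exact hfpf w (lt_of_le_of_lt hw.2 (max_lt hax hay)) hfw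

private lemma escape_below_s9 (f : ℝ ≃o ℝ) {a : ℝ} (hpos : ∀ x, x < a → x < f x)
    {y : ℝ} (hy : y < a) (M : ℝ) : ∃ n : ℕ, (⇑f.symm)^[n] y < M := by
  by_contra hcon
  push_neg at hcon
  set u : ℕ → ℝ := fun n => (⇑f.symm)^[n] y with hu
  have hdec : ∀ x, x < a → f.symm x < x := by
    intro x hx
    by_contra hge
    push_neg at hge
    have h1 := f.monotone hge
    rw [f.apply_symm_apply] at h1
    exact absurd (hpos x hx) (not_lt.mpr h1)
  have hua : ∀ n, u n < a := by
    intro n; induction n with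
    | zero => simpa [hu]
    | succ n ih =>
      have h2 : u (n+1) = f.symm (u n) := Function.iterate_succ_apply' _ _ _
      rw [h2]; exact lt_trans (hdec _ ih) ih
  have hbdd : BddBelow (range u) := ⟨M, by rintro z ⟨n, rfl⟩; exact hcon n⟩
  set L := ⨅ n, u n with hL
  have hLle : ∀ n, L ≤ u n := fun n => ciInf_le hbdd n
  have hfL : ∀ n, f L ≤ u n := by
    intro n
    have h2 : f L ≤ f (u (n+1)) := f.monotone (hLle (n+1))
    have h3 : f (u (n+1)) = u n := by
      have h4 : u (n+1) = f.symm (u n) := Function.iterate_succ_apply' _ _ _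
      rw [h4, f.apply_symm_apply]
    linarith
  have hfLL : f L ≤ L := le_ciInf hfL
  have hLa : L < a := lt_of_le_of_lt (hLle 0) (by simpa [hu] using hy)
  exact absurd (hpos L hLa) (not_lt.mpr hfLL)

private lemma escape_above_s9 (f : ℝ ≃o ℝ) {a : ℝ} (hneg : ∀ x, a < x → f x < x)
    {y : ℝ} (hy : a < y) (M : ℝ) : ∃ n : ℕ, M < (⇑f.symm)^[n] y := by
  by_contra hcon
  push_neg at hcon
  set u : ℕ → ℝ := fun n => (⇑f.symm)^[n] y with hu
  have hinc : ∀ x, a < x → x < f.symm x := by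
    intro x hx
    by_contra hge
    push_neg at hge
    have h1 := f.monotone hge
    rw [f.apply_symm_apply] at h1
    exact absurd (hneg x hx) (not_lt.mpr h1)
  have hua : ∀ n, a < u n := by
    intro n; induction n with
    | zero => simpa [hu]
    | succ n ih =>
      have h2 : u (n+1) = f.symm (u n) := Function.iterate_succ_apply' _ _ _
      rw [h2]; exact lt_trans ih (hinc _ ih)
  have hbdd : BddAbove (range u) := ⟨M, by rintro z ⟨n, rfl⟩; exact hcon n⟩
  set L := ⨆ n, u n with hL
  have hLle : ∀ n, u n ≤ L := fun n => le_ciSup hbdd n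
  have hfL : ∀ n, u n ≤ f L := by
    intro n
    have h2 : f (u (n+1)) ≤ f L := f.monotone (hLle (n+1))
    have h3 : f (u (n+1)) = u n := by
      have h4 : u (n+1) = f.symm (u n) := Function.iterate_succ_apply' _ _ _
      rw [h4, f.apply_symm_apply]
    linarith
  have hfLL : L ≤ f L := ciSup_le hfL
  have hLa : a < L := lt_of_lt_of_le (by simpa [hu] using hy) (hLle 0)
  exact absurd (hneg L hLa) (not_lt.mpr hfLL)

private lemma orbit_unbounded_above {G : Type*} [Group G] (ρ : G →* (ℝ ≃o ℝ)) (H : Subgroup G)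
    (hnoglobal : ¬ ∃ x : ℝ, ∀ h ∈ H, ρ h x = x) (x M : ℝ) : ∃ k ∈ H, M < ρ k x := by
  by_contra hcon
  push_neg at hcon
  set A : Set ℝ := {y | ∃ k ∈ H, ρ k x = y} with hA
  have hne : A.Nonempty := ⟨x, 1, H.one_mem, by simp⟩
  have hbdd : BddAbove A := ⟨M, by rintro y ⟨k, hk, rfl⟩; exact hcon k hk⟩
  have hlub := isLUB_csSup hne hbdd
  refine hnoglobal ⟨sSup A, fun h hh => ?_⟩
  have hlub2 : IsLUB A (ρ h (sSup A)) := by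
    constructor
    · rintro y ⟨k, hk, rfl⟩
      have h1 : ρ (h⁻¹ * k) x ∈ A := ⟨h⁻¹ * k, H.mul_mem (H.inv_mem hh) hk, rfl⟩
      have h2 : ρ (h⁻¹ * k) x ≤ sSup A := hlub.1 h1
      have h3 := (ρ h).monotone h2
      rw [← rho_mul, ← mul_assoc, mul_inv_cancel, one_mul] at h3
      exact h3
    · intro c hc
      have h5 : ∀ y ∈ A, y ≤ ρ h⁻¹ c := by
        rintro y ⟨k, hk, rfl⟩
        have h6 : ρ (h * k) x ≤ c := hc ⟨h * k, H.mul_mem hh hk, rfl⟩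
        have h7 := (ρ h⁻¹).monotone h6
        rw [← rho_mul, ← mul_assoc, inv_mul_cancel, one_mul] at h7
        exact h7
      have h8 := hlub.2 h5
      have h9 := (ρ h).monotone h8
      rwa [← rho_mul, mul_inv_cancel, map_one] at h9
  exact hlub2.unique hlub

private lemma orbit_unbounded_below {G : Type*} [Group G] (ρ : G →* (ℝ ≃o ℝ)) (H : Subgroup G)
    (hnoglobal : ¬ ∃ x : ℝ, ∀ h ∈ H, ρ h x = x) (x M : ℝ) : ∃ k ∈ H, ρ k x < M := by
  by_contra hcon
  push_neg at hcon
  set A : Set ℝ := {y | ∃ k ∈ H, ρ k x = y} with hA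
  have hne : A.Nonempty := ⟨x, 1, H.one_mem, by simp⟩
  have hbdd : BddBelow A := ⟨M, by rintro y ⟨k, hk, rfl⟩; exact hcon k hk⟩
  have hglb := isGLB_csInf hne hbdd
  refine hnoglobal ⟨sInf A, fun h hh => ?_⟩
  have hglb2 : IsGLB A (ρ h (sInf A)) := by
    constructor
    · rintro y ⟨k, hk, rfl⟩
      have h1 : ρ (h⁻¹ * k) x ∈ A := ⟨h⁻¹ * k, H.mul_mem (H.inv_mem hh) hk, rfl⟩
      have h2 : sInf A ≤ ρ (h⁻¹ * k) x := hglb.1 h1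
      have h3 := (ρ h).monotone h2
      rw [← rho_mul, ← mul_assoc, mul_inv_cancel, one_mul] at h3
      exact h3
    · intro c hc
      have h5 : ∀ y ∈ A, ρ h⁻¹ c ≤ y := by
        rintro y ⟨k, hk, rfl⟩
        have h6 : c ≤ ρ (h * k) x := hc ⟨h * k, H.mul_mem hh hk, rfl⟩
        have h7 := (ρ h⁻¹).monotone h6
        rw [← rho_mul, ← mul_assoc, inv_mul_cancel, one_mul] at h7
        exact h7
      have h8 := hglb.2 h5
      have h9 := (ρ h).monotone h8
      rwa [← rho_mul, mul_inv_cancel, map_one] at h9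
  exact hglb2.unique hglb

private lemma all_upper_ray_false {G : Type*} [Group G] (ρ : G →* (ℝ ≃o ℝ)) (H : Subgroup G)
    (hnoglobal : ¬ ∃ x : ℝ, ∀ h ∈ H, ρ h x = x)
    (hconv : ∀ h ∈ H, ∀ a b c : ℝ, ρ h a = a → ρ h b = b → a ≤ c → c ≤ b → ρ h c = c)
    (hfix : ∀ h ∈ H, ∃ x : ℝ, ρ h x = x)
    (hub : ∀ h ∈ H, (∃ x, ρ h x ≠ x) → ¬ BddAbove {x : ℝ | ρ h x = x}) : False := by
  -- every nontrivial element has a minimal fixed point, with everything above fixed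
  have key : ∀ h ∈ H, (∃ x, ρ h x ≠ x) →
      ∃ c : ℝ, ρ h c = c ∧ (∀ y, c ≤ y → ρ h y = y) ∧ ∀ x, x < c → ρ h x ≠ x := by
    intro h hh hnt
    have hBA := hub h hh hnt
    rw [not_bddAbove_iff] at hBA
    have hbb : BddBelow {x : ℝ | ρ h x = x} := by
      by_contra hnb
      rw [not_bddBelow_iff] at hnb
      obtain ⟨z, hz⟩ := hnt
      obtain ⟨lo, hlo, hlo2⟩ := hnb z
      obtain ⟨hi, hhi, hhi2⟩ := hBA z
      exact hz (hconv h hh lo hi z hlo hhi (le_of_lt hlo2) (le_of_lt hhi2))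
    have hne : {x : ℝ | ρ h x = x}.Nonempty := hfix h hh
    have hmem := (fix_closed (ρ h)).csInf_mem hne hbb
    refine ⟨sInf {x : ℝ | ρ h x = x}, hmem, ?_, ?_⟩
    · intro y hy
      obtain ⟨hi, hhi, hhi2⟩ := hBA y
      exact hconv h hh _ hi y hmem hhi hy (le_of_lt hhi2)
    · intro x hx hfx
      exact absurd (csInf_le hbb hfx) (not_le.mpr hx)
  -- upgrade to a positive (below the ray) element
  have keypos : ∀ h ∈ H, (∃ x, ρ h x ≠ x) →
      ∃ h' ∈ H, ∃ c : ℝ, (∀ y, c ≤ y → ρ h' y = y) ∧ (∀ x, x < c → x < ρ h' x) ∧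
        (∀ x, ρ h x = x ↔ ρ h' x = x) := by
    intro h hh hnt
    obtain ⟨c, hc, hcup, hcfpf⟩ := key h hh hnt
    rcases sign_Iio (ρ h) hcfpf with hneg | hpos
    · refine ⟨h⁻¹, H.inv_mem hh, c, ?_, ?_, ?_⟩
      · intro y hy; exact inv_fix ρ h (hcup y hy)
      · intro x hx; exact flip_lt ρ h (hneg x hx)
      · intro x
        constructor
        · intro hfx; exact inv_fix ρ h hfx
        · intro hfx
          have := inv_fix ρ h⁻¹ hfx
          rwa [inv_inv] at this
    · exact ⟨h, hh, c, hcup, hpos, fun x => Iff.rfl⟩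
  -- get two elements with distinct rays
  have hglob : ∀ x : ℝ, ∃ h ∈ H, ρ h x ≠ x := by
    by_contra hc
    push_neg at hc
    obtain ⟨x, hx⟩ := hc
    exact hnoglobal ⟨x, hx⟩
  obtain ⟨h₁, hh₁, hnt₁⟩ := hglob 0
  obtain ⟨h, hh, a, haup, hapos, hafixiff⟩ := keypos h₁ hh₁ ⟨0, hnt₁⟩
  obtain ⟨h₂, hh₂, hnt₂⟩ := hglob a
  obtain ⟨k, hk, b, hbup, hbpos, hbfixiff⟩ := keypos h₂ hh₂ ⟨a, hnt₂⟩
  have hab : a < b := by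
    by_contra hba
    push_neg at hba
    exact hnt₂ ((hbfixiff a).mpr (hbup a hba))
  -- the element w = k * (h⁻¹)^n
  -- iterates of h⁻¹ fix [a, ∞)
  have hiterfix : ∀ n : ℕ, ∀ y, a ≤ y → ρ ((h⁻¹)^n) y = y := by
    intro n
    induction n with
    | zero => intro y _; simp
    | succ n ih =>
      intro y hy
      rw [pow_succ, rho_mul]
      have h1 : ρ h⁻¹ y = y := inv_fix ρ h (haup y hy)
      rw [h1]; exact ih y hy
  have hiter : ∀ n : ℕ, ∀ x : ℝ, ρ ((h⁻¹)^n) x = (⇑(ρ h).symm)^[n] x := by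
    intro n
    induction n with
    | zero => intro x; simp
    | succ n ih =>
      intro x
      rw [pow_succ, rho_mul, Function.iterate_succ_apply, ← rho_inv_fun ρ h x, ih]
  set x₀ : ℝ := a - 1 with hx₀
  obtain ⟨n, hn⟩ := escape_below_s9 (ρ h) hapos (show x₀ < a by simp [hx₀]) (ρ k⁻¹ x₀)
  set w : G := k * (h⁻¹)^n with hw
  have hwH : w ∈ H := H.mul_mem hk (H.pow_mem (H.inv_mem hh) n)
  have hwup : ∀ y, b ≤ y → ρ w y = y := by
    intro y hy
    rw [hw, rho_mul, hiterfix n y (le_of_lt (lt_of_lt_of_le hab hy))]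
    exact hbup y hy
  have hwa : a < ρ w a := by
    rw [hw, rho_mul, hiterfix n a (le_refl a)]
    exact hbpos a hab
  have hwnt : ∃ x, ρ w x ≠ x := ⟨a, ne_of_gt hwa⟩
  obtain ⟨c, hcfix, hcup, hcfpf⟩ := key w hwH hwnt
  have hac : a < c := by
    by_contra hca
    push_neg at hca
    exact absurd (hcup a hca) (ne_of_gt hwa)
  have hwpos : ∀ x, x < c → x < ρ w x := by
    rcases sign_Iio (ρ w) hcfpf with hneg | hpos
    · exact absurd (hneg a hac) (not_lt.mpr (le_of_lt hwa))
    · exact hpos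
  have h1 : ρ w x₀ = ρ k ((⇑(ρ h).symm)^[n] x₀) := by
    rw [hw, rho_mul, hiter]
  have h2 : ρ k ((⇑(ρ h).symm)^[n] x₀) < x₀ := by
    have := (ρ k).strictMono hn
    rwa [rho_inv_apply] at this
  have h3 : x₀ < ρ w x₀ := hwpos x₀ (by linarith)
  rw [h1] at h3
  linarith

private lemma all_lower_ray_false {G : Type*} [Group G] (ρ : G →* (ℝ ≃o ℝ)) (H : Subgroup G)
    (hnoglobal : ¬ ∃ x : ℝ, ∀ h ∈ H, ρ h x = x)
    (hconv : ∀ h ∈ H, ∀ a b c : ℝ, ρ h a = a → ρ h b = b → a ≤ c → c ≤ b → ρ h c = c)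
    (hfix : ∀ h ∈ H, ∃ x : ℝ, ρ h x = x)
    (hlb : ∀ h ∈ H, (∃ x, ρ h x ≠ x) → ¬ BddBelow {x : ℝ | ρ h x = x}) : False := by
  have key : ∀ h ∈ H, (∃ x, ρ h x ≠ x) →
      ∃ c : ℝ, ρ h c = c ∧ (∀ y, y ≤ c → ρ h y = y) ∧ ∀ x, c < x → ρ h x ≠ x := by
    intro h hh hnt
    have hBB := hlb h hh hnt
    rw [not_bddBelow_iff] at hBB
    have hba : BddAbove {x : ℝ | ρ h x = x} := by
      by_contra hnb
      rw [not_bddAbove_iff] at hnb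
      obtain ⟨z, hz⟩ := hnt
      obtain ⟨lo, hlo, hlo2⟩ := hBB z
      obtain ⟨hi, hhi, hhi2⟩ := hnb z
      exact hz (hconv h hh lo hi z hlo hhi (le_of_lt hlo2) (le_of_lt hhi2))
    have hne : {x : ℝ | ρ h x = x}.Nonempty := hfix h hh
    have hmem := (fix_closed (ρ h)).csSup_mem hne hba
    refine ⟨sSup {x : ℝ | ρ h x = x}, hmem, ?_, ?_⟩
    · intro y hy
      obtain ⟨lo, hlo, hlo2⟩ := hBB y
      exact hconv h hh lo _ y hlo hmem (le_of_lt hlo2) hy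
    · intro x hx hfx
      exact absurd (le_csSup hba hfx) (not_le.mpr hx)
  have keyneg : ∀ h ∈ H, (∃ x, ρ h x ≠ x) →
      ∃ h' ∈ H, ∃ c : ℝ, (∀ y, y ≤ c → ρ h' y = y) ∧ (∀ x, c < x → ρ h' x < x) ∧
        (∀ x, ρ h x = x ↔ ρ h' x = x) := by
    intro h hh hnt
    obtain ⟨c, hc, hcup, hcfpf⟩ := key h hh hnt
    rcases sign_Ioi (ρ h) hcfpf with hneg | hpos
    · exact ⟨h, hh, c, hcup, hneg, fun x => Iff.rfl⟩
    · refine ⟨h⁻¹, H.inv_mem hh, c, ?_, ?_, ?_⟩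
      · intro y hy; exact inv_fix ρ h (hcup y hy)
      · intro x hx; exact flip_gt ρ h (hpos x hx)
      · intro x
        constructor
        · intro hfx; exact inv_fix ρ h hfx
        · intro hfx
          have := inv_fix ρ h⁻¹ hfx
          rwa [inv_inv] at this
  have hglob : ∀ x : ℝ, ∃ h ∈ H, ρ h x ≠ x := by
    by_contra hc
    push_neg at hc
    obtain ⟨x, hx⟩ := hc
    exact hnoglobal ⟨x, hx⟩
  obtain ⟨h₁, hh₁, hnt₁⟩ := hglob 0
  obtain ⟨h, hh, a, haup, haneg, hafixiff⟩ := keyneg h₁ hh₁ ⟨0, hnt₁⟩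
  obtain ⟨h₂, hh₂, hnt₂⟩ := hglob a
  obtain ⟨k, hk, b, hbup, hbneg, hbfixiff⟩ := keyneg h₂ hh₂ ⟨a, hnt₂⟩
  have hab : b < a := by
    by_contra hba
    push_neg at hba
    exact hnt₂ ((hbfixiff a).mpr (hbup a hba))
  have hiterfix : ∀ n : ℕ, ∀ y, y ≤ a → ρ ((h⁻¹)^n) y = y := by
    intro n
    induction n with
    | zero => intro y _; simp
    | succ n ih =>
      intro y hy
      rw [pow_succ, rho_mul]
      have h1 : ρ h⁻¹ y = y := inv_fix ρ h (haup y hy)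
      rw [h1]; exact ih y hy
  have hiter : ∀ n : ℕ, ∀ x : ℝ, ρ ((h⁻¹)^n) x = (⇑(ρ h).symm)^[n] x := by
    intro n
    induction n with
    | zero => intro x; simp
    | succ n ih =>
      intro x
      rw [pow_succ, rho_mul, Function.iterate_succ_apply, ← rho_inv_fun ρ h x, ih]
  set x₀ : ℝ := a + 1 with hx₀
  obtain ⟨n, hn⟩ := escape_above_s9 (ρ h) haneg (show a < x₀ by simp [hx₀]) (ρ k⁻¹ x₀)
  set w : G := k * (h⁻¹)^n with hw
  have hwH : w ∈ H := H.mul_mem hk (H.pow_mem (H.inv_mem hh) n)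
  have hwa : ρ w a < a := by
    rw [hw, rho_mul, hiterfix n a (le_refl a)]
    exact hbneg a hab
  have hwnt : ∃ x, ρ w x ≠ x := ⟨a, ne_of_lt hwa⟩
  obtain ⟨c, hcfix, hcup, hcfpf⟩ := key w hwH hwnt
  have hac : c < a := by
    by_contra hca
    push_neg at hca
    exact absurd (hcup a hca) (ne_of_lt hwa)
  have hwneg : ∀ x, c < x → ρ w x < x := by
    rcases sign_Ioi (ρ w) hcfpf with hneg | hpos
    · exact hneg
    · exact absurd (hpos a hac) (not_lt.mpr (le_of_lt hwa))
  have h1 : ρ w x₀ = ρ k ((⇑(ρ h).symm)^[n] x₀) := by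
    rw [hw, rho_mul, hiter]
  have h2 : x₀ < ρ k ((⇑(ρ h).symm)^[n] x₀) := by
    have := (ρ k).strictMono hn
    rwa [rho_inv_apply] at this
  have h3 : ρ w x₀ < x₀ := hwneg x₀ (by linarith)
  rw [h1] at h3
  linarith

/-- If `G` acts on the line by order-preserving homeomorphisms, `T ∈ G` acts freely, and
`H ⊴ G` has no global fixed point while each of its elements has a fixed point, then `H`
contains crossed elements. -/
theorem normal_subgroup_crossed_elements {G : Type*} [Group G]
    (ρ : G →* (ℝ ≃o ℝ)) (H : Subgroup G) (hHn : H.Normal)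
    (T : G) (hT : ∀ x : ℝ, ρ T x ≠ x)
    (hnoglobal : ¬ ∃ x : ℝ, ∀ h ∈ H, ρ h x = x)
    (hfix : ∀ h ∈ H, ∃ x : ℝ, ρ h x = x) :
    ∃ f ∈ H, ∃ g ∈ H, Crossed (⇑(ρ f)) (⇑(ρ g)) := by
  classical
  by_cases hbg : ∃ h ∈ H, ∃ a b c : ℝ, a < c ∧ c < b ∧ ρ h a = a ∧ ρ h b = b ∧ ρ h c ≠ c
  · -- bounded gap: h and h⁻¹ are crossed
    obtain ⟨h, hh, a, b, c, hac, hcb, hfa, hfb, hfc⟩ := hbg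
    set A : Set ℝ := Icc a c ∩ {x : ℝ | ρ h x = x} with hA
    set B : Set ℝ := Icc c b ∩ {x : ℝ | ρ h x = x} with hB
    have hAcl : IsClosed A := isClosed_Icc.inter (fix_closed (ρ h))
    have hBcl : IsClosed B := isClosed_Icc.inter (fix_closed (ρ h))
    have hAne : A.Nonempty := ⟨a, ⟨le_refl a, le_of_lt hac⟩, hfa⟩
    have hBne : B.Nonempty := ⟨b, ⟨le_of_lt hcb, le_refl b⟩, hfb⟩
    have hAbdd : BddAbove A := BddAbove.mono (inter_subset_left) bddAbove_Icc
    have hBbdd : BddBelow B := BddBelow.mono (inter_subset_left) bddBelow_Icc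
    set a' := sSup A with ha'
    set b' := sInf B with hb'
    have hamem := hAcl.csSup_mem hAne hAbdd
    have hbmem := hBcl.csInf_mem hBne hBbdd
    have hfa' : ρ h a' = a' := hamem.2
    have hfb' : ρ h b' = b' := hbmem.2
    have haa : a ≤ a' := le_csSup hAbdd ⟨⟨le_refl a, le_of_lt hac⟩, hfa⟩
    have hac' : a' < c := lt_of_le_of_ne hamem.1.2 (fun he => hfc (he ▸ hfa'))
    have hcb' : c < b' := lt_of_le_of_ne' hbmem.1.1 (fun he => hfc (he ▸ hfb'))
    have hbb : b' ≤ b := hbmem.1.2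
    have hab' : a' < b' := lt_trans hac' hcb'
    have hfpf : ∀ x, a' < x → x < b' → ρ h x ≠ x := by
      intro x hx1 hx2 hfx
      rcases le_or_gt x c with hxc | hxc
      · exact absurd (le_csSup hAbdd ⟨⟨le_trans haa (le_of_lt hx1), hxc⟩, hfx⟩)
          (not_le.mpr hx1)
      · exact absurd (csInf_le hBbdd ⟨⟨le_of_lt hxc, le_trans (le_of_lt hx2) hbb⟩, hfx⟩)
          (not_le.mpr hx2)
    rcases sign_Ioo (ρ h) hfpf with hneg | hpos
    · refine ⟨h, hh, h⁻¹, H.inv_mem hh, a', b', hab', hfa', inv_fix ρ h hfb', ?_⟩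
      rintro x ⟨hx1, hx2⟩
      exact ⟨hneg x hx1 hx2, flip_lt ρ h (hneg x hx1 hx2)⟩
    · refine ⟨h⁻¹, H.inv_mem hh, h, hh, a', b', hab', inv_fix ρ h hfa', hfb', ?_⟩
      rintro x ⟨hx1, hx2⟩
      exact ⟨flip_gt ρ h (hpos x hx1 hx2), hpos x hx1 hx2⟩
  · push_neg at hbg
    have hconv : ∀ h ∈ H, ∀ a b c : ℝ, ρ h a = a → ρ h b = b → a ≤ c → c ≤ b → ρ h c = c := by
      intro h hh a b c hfa hfb hac hcb
      rcases eq_or_lt_of_le hac with rfl | hac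
      · exact hfa
      rcases eq_or_lt_of_le hcb with rfl | hcb
      · exact hfb
      exact hbg h hh a b c hac hcb hfa hfb
    by_cases hP : ∃ h ∈ H, (∃ x, ρ h x ≠ x) ∧ BddAbove {x : ℝ | ρ h x = x}
    · by_cases hQ : ∃ h ∈ H, (∃ x, ρ h x ≠ x) ∧ BddBelow {x : ℝ | ρ h x = x}
      · -- construction
        obtain ⟨h, hh, hhnt, hhbdd⟩ := hP
        obtain ⟨k, hk, hknt, hkbdd⟩ := hQ
        set β := sSup {x : ℝ | ρ h x = x} with hβ
        have hβmem : ρ h β = β := (fix_closed (ρ h)).csSup_mem (hfix h hh) hhbdd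
        have hβfpf : ∀ x, β < x → ρ h x ≠ x := by
          intro x hx hfx
          exact absurd (le_csSup hhbdd hfx) (not_le.mpr hx)
        set α := sInf {x : ℝ | ρ k x = x} with hα
        have hαmem : ρ k α = α := (fix_closed (ρ k)).csInf_mem (hfix k hk) hkbdd
        have hαfpf : ∀ x, x < α → ρ k x ≠ x := by
          intro x hx hfx
          exact absurd (csInf_le hkbdd hfx) (not_le.mpr hx)
        -- choose f decreasing above β
        obtain ⟨f, hfH, hfβ, hfneg⟩ :
            ∃ f ∈ H, ρ f β = β ∧ ∀ x, β < x → ρ f x < x := by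
          rcases sign_Ioi (ρ h) hβfpf with hneg | hpos
          · exact ⟨h, hh, hβmem, hneg⟩
          · exact ⟨h⁻¹, H.inv_mem hh, inv_fix ρ h hβmem, fun x hx => flip_gt ρ h (hpos x hx)⟩
        -- choose g' increasing below α
        obtain ⟨g', hg'H, hg'α, hg'pos⟩ :
            ∃ g' ∈ H, ρ g' α = α ∧ ∀ x, x < α → x < ρ g' x := by
          rcases sign_Iio (ρ k) hαfpf with hneg | hpos
          · exact ⟨k⁻¹, H.inv_mem hk, inv_fix ρ k hαmem, fun x hx => flip_lt ρ k (hneg x hx)⟩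
          · exact ⟨k, hk, hαmem, hpos⟩
        obtain ⟨u, hu, huβ⟩ := orbit_unbounded_above ρ H hnoglobal α β
        set g : G := u * g' * u⁻¹ with hg
        have hgH : g ∈ H := H.mul_mem (H.mul_mem hu hg'H) (H.inv_mem hu)
        set b := ρ u α with hbdef
        have hgb : ρ g b = b := by
          rw [hg, rho_mul, rho_mul, hbdef, rho_inv_apply', hg'α]
        have hgx : ∀ x, x < b → x < ρ g x := by
          intro x hx
          have h1 : ρ u⁻¹ x < α := by
            have := (ρ u⁻¹).strictMono hx
            rwa [hbdef, rho_inv_apply'] at this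
          have h2 := (ρ u).strictMono (hg'pos _ h1)
          rw [rho_inv_apply] at h2
          rw [hg, rho_mul, rho_mul]
          exact h2
        refine ⟨f, hfH, g, hgH, β, b, huβ, hfβ, hgb, ?_⟩
        rintro x ⟨hx1, hx2⟩
        exact ⟨hfneg x hx1, hgx x hx2⟩
      · push_neg at hQ
        exact absurd (all_lower_ray_false ρ H hnoglobal hconv hfix hQ) (fun h => h)
    · push_neg at hP
      exact absurd (all_upper_ray_false ρ H hnoglobal hconv hfix hP) (fun h => h)
end

section
/- Let G be a group acting on the real line by order-preserving homeomorphisms with no global fixed point (no x ∈ ℝ is fixed by every element of G). Let μ be a nonzero Radon measure on ℝ quasi-invariant under G (for every g ∈ G there is λ_g > 0 with g_*μ = λ_g·μ, where g_*μ(B) = μ(g⁻¹(B))). Let Λ be a nonempty closed G-invariant subset of the support of μ such that Λ has an accumulation point and Λ is minimal (every nonempty closed G-invariant subset of Λ equals Λ). Then Λ equals the support of μ. -/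
open MeasureTheory Filter

/-- The support of a measure `μ` on ℝ: the points all of whose open neighbourhoods have
positive measure. -/
def measureSupport (μ : Measure ℝ) : Set ℝ :=
  {x | ∀ U : Set ℝ, IsOpen U → x ∈ U → 0 < μ U}

set_option maxHeartbeats 1600000 in
/-- If `G` acts on the line by order-preserving homeomorphisms with no global fixed point
and quasi-preserves a nonzero Radon measure `μ`, then any nonempty closed `G`-invariant
minimal subset `Λ` of the support of `μ` having an accumulation point equals the support
of `μ`. -/
theorem minimal_set_eq_support {G : Type*} [Group G]
    (ρ : G →* (ℝ ≃o ℝ))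
    (hnofix : ¬ ∃ x : ℝ, ∀ g : G, ρ g x = x)
    (μ : Measure ℝ) (hμ : μ ≠ 0) (hrad : IsRadon μ)
    (hqi : ∀ g : G, ∃ lam : ℝ, 0 < lam ∧
      Measure.map (⇑(ρ g)) μ = ENNReal.ofReal lam • μ)
    (Λ : Set ℝ) (hne : Λ.Nonempty) (hcl : IsClosed Λ)
    (hinv : ∀ g : G, ρ g '' Λ = Λ)
    (hsub : Λ ⊆ measureSupport μ)
    (hacc : ∃ x : ℝ, AccPt x (𝓟 Λ))
    (hmin : ∀ Λ' ⊆ Λ, Λ'.Nonempty → IsClosed Λ' → (∀ g : G, ρ g '' Λ' = Λ') → Λ' = Λ) :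
    Λ = measureSupport μ := by
  classical
  refine Set.Subset.antisymm hsub ?_
  intro x hx
  by_contra hxΛ
  choose lam hlam hmap using hqi
  -- basic group action facts
  have hcomp : ∀ (g h : G) (z : ℝ), ρ g (ρ h z) = ρ (g * h) z := by
    intro g h z; rw [map_mul]; rfl
  have hone : ∀ z : ℝ, ρ (1 : G) z = z := by
    intro z; rw [map_one]; rfl
  have hinvr : ∀ (g : G) (z : ℝ), ρ g (ρ g⁻¹ z) = z := by
    intro g z; rw [hcomp, mul_inv_cancel, hone]
  have hmemΛ : ∀ (g : G) (z : ℝ), z ∈ Λ → ρ g z ∈ Λ := by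
    intro g z hz
    rw [← hinv g]; exact Set.mem_image_of_mem _ hz
  -- Λ is unbounded above and below
  have hub : ¬ BddAbove Λ := by
    intro hbdd
    apply hnofix
    refine ⟨sSup Λ, ?_⟩
    have hsup : sSup Λ ∈ Λ := hcl.csSup_mem hne hbdd
    have key : ∀ g : G, ρ g (sSup Λ) ≤ sSup Λ := fun g => le_csSup hbdd (hmemΛ g _ hsup)
    intro g
    refine le_antisymm (key g) ?_
    have h2 : ρ g (ρ g⁻¹ (sSup Λ)) ≤ ρ g (sSup Λ) := (ρ g).monotone (key g⁻¹)
    rwa [hinvr] at h2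
  have hlb : ¬ BddBelow Λ := by
    intro hbdd
    apply hnofix
    refine ⟨sInf Λ, ?_⟩
    have hinf : sInf Λ ∈ Λ := hcl.csInf_mem hne hbdd
    have key : ∀ g : G, sInf Λ ≤ ρ g (sInf Λ) := fun g => csInf_le hbdd (hmemΛ g _ hinf)
    intro g
    refine le_antisymm ?_ (key g)
    have h2 : ρ g (sInf Λ) ≤ ρ g (ρ g⁻¹ (sInf Λ)) := (ρ g).monotone (key g⁻¹)
    rwa [hinvr] at h2
  -- the endpoints of the gap of Λ around x
  obtain ⟨zb, hzbΛ, hxzb⟩ := not_bddAbove_iff.mp hub x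
  obtain ⟨za, hzaΛ, hzax⟩ := not_bddBelow_iff.mp hlb x
  set b := sInf (Λ ∩ Set.Ici x) with hbdef
  have hbS : b ∈ Λ ∩ Set.Ici x :=
    (hcl.inter isClosed_Ici).csInf_mem ⟨zb, hzbΛ, le_of_lt hxzb⟩ ⟨x, fun z hz => hz.2⟩
  have hbΛ : b ∈ Λ := hbS.1
  have hxb : x < b := lt_of_le_of_ne hbS.2 (fun h => hxΛ (h ▸ hbΛ))
  have hbmin : ∀ z ∈ Λ, x ≤ z → b ≤ z := fun z hz hxz =>
    csInf_le ⟨x, fun w hw => hw.2⟩ ⟨hz, hxz⟩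
  set a := sSup (Λ ∩ Set.Iic x) with hadef
  have haS : a ∈ Λ ∩ Set.Iic x :=
    (hcl.inter isClosed_Iic).csSup_mem ⟨za, hzaΛ, le_of_lt hzax⟩ ⟨x, fun z hz => hz.2⟩
  have haΛ : a ∈ Λ := haS.1
  have hax : a < x := lt_of_le_of_ne haS.2 (fun h => hxΛ (h ▸ haΛ))
  have hamax : ∀ z ∈ Λ, z ≤ x → z ≤ a := fun z hz hzx =>
    le_csSup ⟨x, fun w hw => hw.2⟩ ⟨hz, hzx⟩
  have hab : a < b := lt_trans hax hxb
  have hgap : ∀ z ∈ Λ, z ≤ a ∨ b ≤ z := by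
    intro z hz
    rcases le_total z x with h | h
    · exact Or.inl (hamax z hz h)
    · exact Or.inr (hbmin z hz h)
  clear_value b a
  -- measure basics
  have hfin : ∀ s t : ℝ, μ (Set.Ioc s t) ≠ ⊤ := fun s t =>
    ((measure_mono Set.Ioc_subset_Icc_self).trans_lt (hrad _ isCompact_Icc)).ne
  have hfinIoo : ∀ s t : ℝ, μ (Set.Ioo s t) ≠ ⊤ := fun s t =>
    ((measure_mono Set.Ioo_subset_Icc_self).trans_lt (hrad _ isCompact_Icc)).ne
  have hKpos : 0 < μ (Set.Ioo a b) := hx _ isOpen_Ioo ⟨hax, hxb⟩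
  set Kr := (μ (Set.Ioo a b)).toReal with hKrdef
  have hKr : 0 < Kr := ENNReal.toReal_pos hKpos.ne' (hfinIoo a b)
  clear_value Kr
  have hmeasg : ∀ g : G, Measurable (ρ g) := fun g => (ρ g).toHomeomorph.continuous.measurable
  -- the scaling identities
  have hSC : ∀ (g : G) (s t : ℝ),
      μ (Set.Ioc s t) = ENNReal.ofReal (lam g) * μ (Set.Ioc (ρ g s) (ρ g t)) := by
    intro g s t
    have h1 : (ρ g) ⁻¹' (Set.Ioc (ρ g s) (ρ g t)) = Set.Ioc s t := by
      ext z
      simp [Set.mem_preimage, Set.mem_Ioc, (ρ g).lt_iff_lt, (ρ g).le_iff_le]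
    have h2 := congrArg (fun ν : Measure ℝ => ν (Set.Ioc (ρ g s) (ρ g t))) (hmap g)
    simp only [Measure.smul_apply, smul_eq_mul] at h2
    rw [Measure.map_apply (hmeasg g) measurableSet_Ioc, h1] at h2
    exact h2
  have hSCO : ∀ (g : G) (s t : ℝ),
      μ (Set.Ioo s t) = ENNReal.ofReal (lam g) * μ (Set.Ioo (ρ g s) (ρ g t)) := by
    intro g s t
    have h1 : (ρ g) ⁻¹' (Set.Ioo (ρ g s) (ρ g t)) = Set.Ioo s t := by
      ext z
      simp [Set.mem_preimage, Set.mem_Ioo, (ρ g).lt_iff_lt]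
    have h2 := congrArg (fun ν : Measure ℝ => ν (Set.Ioo (ρ g s) (ρ g t))) (hmap g)
    simp only [Measure.smul_apply, smul_eq_mul] at h2
    rw [Measure.map_apply (hmeasg g) measurableSet_Ioo, h1] at h2
    exact h2
  -- real-valued interval measure
  set m : ℝ → ℝ → ℝ := fun s t => (μ (Set.Ioc s t)).toReal with hmdef
  have hm0 : ∀ s t : ℝ, t ≤ s → m s t = 0 := by
    intro s t h
    simp [hmdef, Set.Ioc_eq_empty (not_lt.mpr h)]
  have hmnn : ∀ s t : ℝ, 0 ≤ m s t := fun s t => ENNReal.toReal_nonneg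
  have hmadd : ∀ s u t : ℝ, s ≤ u → u ≤ t → m s t = m s u + m u t := by
    intro s u t h1 h2
    have h3 : μ (Set.Ioc s t) = μ (Set.Ioc s u) + μ (Set.Ioc u t) := by
      rw [← Set.Ioc_union_Ioc_eq_Ioc h1 h2,
        measure_union (Set.Ioc_disjoint_Ioc_of_le le_rfl) measurableSet_Ioc]
    simp only [hmdef]
    rw [h3, ENNReal.toReal_add (hfin _ _) (hfin _ _)]
  have hTR : ∀ (g : G) (s t : ℝ), m s t = lam g * m (ρ g s) (ρ g t) := by
    intro g s t
    have h := congrArg ENNReal.toReal (hSC g s t)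
    rwa [ENNReal.toReal_mul, ENNReal.toReal_ofReal (hlam g).le] at h
  -- the measure coordinate φ
  set φ : ℝ → ℝ := fun t => m b t - m t b with hφdef
  have hφb : φ b = 0 := by simp [hφdef, hm0 b b le_rfl]
  have hφadd : ∀ s t : ℝ, s ≤ t → φ t = φ s + m s t := by
    intro s t hst
    rcases le_total b s with hbs | hsb
    · have hbt : b ≤ s := hbs
      have e1 := hmadd b s t hbs hst
      simp only [hφdef]
      rw [hm0 s b hbs, hm0 t b (hbs.trans hst), e1]
      ring
    · rcases le_total b t with hbt | htb
      · have e1 := hmadd s b t hsb hbt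
        simp only [hφdef]
        rw [hm0 b s hsb, hm0 t b hbt, e1]
        ring
      · have e1 := hmadd s t b hst htb
        simp only [hφdef]
        rw [hm0 b s hsb, hm0 b t htb, e1]
        ring
  have hφmono : Monotone φ := by
    intro s t hst
    have h1 := hφadd s t hst
    have h2 := hmnn s t
    linarith
  have hmle : ∀ s t u v : ℝ, Set.Ioc s t ⊆ Set.Ioc u v → m s t ≤ m u v := fun s t u v hsub' =>
    ENNReal.toReal_mono (hfin u v) (measure_mono hsub')
  have hmposIoo : ∀ s t : ℝ, 0 < μ (Set.Ioo s t) → 0 < m s t := fun s t h =>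
    ENNReal.toReal_pos (lt_of_lt_of_le h (measure_mono Set.Ioo_subset_Ioc_self)).ne' (hfin s t)
  have hmab : Kr ≤ m a b := by
    rw [hKrdef]
    exact ENNReal.toReal_mono (hfin a b) (measure_mono Set.Ioo_subset_Ioc_self)
  have hmKb : ∀ (g : G) (s t : ℝ),
      μ (Set.Ioo a b) ≤ ENNReal.ofReal (lam g) * μ (Set.Ioc s t) → Kr ≤ lam g * m s t := by
    intro g s t h1
    have h2 := ENNReal.toReal_mono
      (ENNReal.mul_ne_top ENNReal.ofReal_ne_top (hfin s t)) h1
    rw [ENNReal.toReal_mul, ENNReal.toReal_ofReal (hlam g).le] at h2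
    rw [hKrdef]
    exact h2
  clear_value m φ
  -- the key affine identity
  have hKEY : ∀ (g : G) (t : ℝ), φ (ρ g t) = φ (ρ g b) + φ t / lam g := by
    intro g t
    have hlg := hlam g
    rcases le_total b t with hbt | htb
    · have h1 : ρ g b ≤ ρ g t := (ρ g).monotone hbt
      have h2 := hφadd _ _ h1
      have h3 := hTR g b t
      have h4 := hφadd b t hbt
      rw [hφb] at h4
      have h5 : m (ρ g b) (ρ g t) = φ t / lam g := by
        rw [eq_div_iff (ne_of_gt hlg), mul_comm]
        linarith
      rw [h2, h5]
    · have h1 : ρ g t ≤ ρ g b := (ρ g).monotone htb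
      have h2 := hφadd _ _ h1
      have h3 := hTR g t b
      have h4 := hφadd t b htb
      rw [hφb] at h4
      have h5 : m (ρ g t) (ρ g b) = -(φ t) / lam g := by
        rw [eq_div_iff (ne_of_gt hlg), mul_comm]
        linarith
      have h6 : φ t / lam g = -(m (ρ g t) (ρ g b)) := by
        rw [h5]; ring
      rw [h6, h2]
      ring
  have hKEYinv : ∀ (g : G) (t : ℝ), φ (ρ g⁻¹ t) = (φ t - φ (ρ g b)) * lam g := by
    intro g t
    have h := hKEY g (ρ g⁻¹ t)
    rw [hinvr g t] at h
    have hlg := hlam g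
    have h2 : φ (ρ g⁻¹ t) / lam g = φ t - φ (ρ g b) := by linarith
    rw [← h2]
    field_simp
  -- Λ accumulates on b from the right
  have hDright : ∀ ε : ℝ, 0 < ε → ∃ z ∈ Λ, b < z ∧ z < b + ε := by
    have hDsubΛ : {y : ℝ | AccPt y (𝓟 Λ)} ⊆ Λ := by
      intro y hy
      have h1 : ClusterPt y (𝓟 Λ) := (hy : AccPt y (𝓟 Λ)).clusterPt
      have := mem_closure_iff_clusterPt.mpr h1
      rwa [hcl.closure_eq] at this
    have hDmap : ∀ (g : G) (y : ℝ), AccPt y (𝓟 Λ) → AccPt (ρ g y) (𝓟 Λ) := by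
      intro g y hy
      rw [accPt_iff_nhds] at hy ⊢
      intro U hU
      have hU' : (ρ g) ⁻¹' U ∈ nhds y :=
        (ρ g).toHomeomorph.continuous.continuousAt.preimage_mem_nhds hU
      obtain ⟨z, ⟨hzU, hzΛ⟩, hzy⟩ := hy _ hU'
      exact ⟨ρ g z, ⟨hzU, hmemΛ g z hzΛ⟩, fun hcon => hzy ((ρ g).injective hcon)⟩
    have hDclosed : IsClosed {y : ℝ | AccPt y (𝓟 Λ)} := by
      rw [← isOpen_compl_iff, isOpen_iff_mem_nhds]
      intro y hy
      rw [Set.mem_compl_iff, Set.mem_setOf_eq, accPt_iff_nhds] at hy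
      push_neg at hy
      obtain ⟨U, hU, hUy⟩ := hy
      obtain ⟨V, hVU, hVopen, hyV⟩ := mem_nhds_iff.mp hU
      refine Filter.mem_of_superset (hVopen.mem_nhds hyV) ?_
      intro w hw
      rw [Set.mem_compl_iff, Set.mem_setOf_eq, accPt_iff_nhds]
      push_neg
      by_cases hwy : w = y
      · refine ⟨V, hVopen.mem_nhds hw, ?_⟩
        intro z hz
        have := hUy z ⟨hVU hz.1, hz.2⟩
        rw [this, hwy]
      · refine ⟨V \ {y}, (hVopen.sdiff isClosed_singleton).mem_nhds ⟨hw, hwy⟩, ?_⟩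
        intro z hz
        exact absurd (hUy z ⟨hVU hz.1.1, hz.2⟩) hz.1.2
    have hDinv : ∀ g : G, ρ g '' {y : ℝ | AccPt y (𝓟 Λ)} = {y : ℝ | AccPt y (𝓟 Λ)} := by
      intro g
      apply Set.Subset.antisymm
      · rintro _ ⟨y, hy, rfl⟩
        exact hDmap g y hy
      · intro y hy
        exact ⟨ρ g⁻¹ y, hDmap g⁻¹ y hy, hinvr g y⟩
    have hDne : {y : ℝ | AccPt y (𝓟 Λ)}.Nonempty := hacc
    have hDeq := hmin _ hDsubΛ hDne hDclosed hDinv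
    have hbacc : AccPt b (𝓟 Λ) := by
      have hb2 : b ∈ {y : ℝ | AccPt y (𝓟 Λ)} := by rw [hDeq]; exact hbΛ
      exact hb2
    intro ε hε
    have hU : Set.Ioo a (b + ε) ∈ nhds b :=
      isOpen_Ioo.mem_nhds ⟨hab, lt_add_of_pos_right b hε⟩
    obtain ⟨z, ⟨⟨hza, hzbe⟩, hzΛ⟩, hzb⟩ := accPt_iff_nhds.mp hbacc _ hU
    rcases hgap z hzΛ with h | h
    · exact absurd h (not_le.mpr hza)
    · exact ⟨z, hzΛ, lt_of_le_of_ne h (Ne.symm hzb), hzbe⟩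
  -- the orbit of b is dense in Λ; points of the orbit just right of b
  have horbit : ∀ ε : ℝ, 0 < ε → ∃ g : G, b < ρ g b ∧ ρ g b < b + ε := by
    intro ε hε
    set O := Set.range (fun g : G => ρ g b) with hOdef
    have hOsub : O ⊆ Λ := by
      rintro _ ⟨g, rfl⟩
      exact hmemΛ g b hbΛ
    have hCsub : closure O ⊆ Λ := closure_minimal hOsub hcl
    have hCne : (closure O).Nonempty := ⟨ρ 1 b, subset_closure ⟨1, rfl⟩⟩
    have hCinv : ∀ g : G, ρ g '' closure O = closure O := by
      intro g
      have himg : ρ g '' closure O = closure (ρ g '' O) := (ρ g).toHomeomorph.image_closure O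
      have himg2 : ρ g '' O = O := by
        apply Set.Subset.antisymm
        · rintro _ ⟨_, ⟨h', rfl⟩, rfl⟩
          exact ⟨g * h', (hcomp g h' b).symm⟩
        · rintro _ ⟨h', rfl⟩
          refine ⟨ρ (g⁻¹ * h') b, ⟨g⁻¹ * h', rfl⟩, ?_⟩
          rw [hcomp, mul_inv_cancel_left]
      rw [himg, himg2]
    have hCeq := hmin _ hCsub hCne isClosed_closure hCinv
    obtain ⟨z, hzΛ, hbz, hzbe⟩ := hDright ε hε
    have hzC : z ∈ closure O := hCeq ▸ hzΛ
    obtain ⟨w, hwI, hwO⟩ := (mem_closure_iff.mp hzC) (Set.Ioo b (b + ε)) isOpen_Ioo ⟨hbz, hzbe⟩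
    obtain ⟨g, rfl⟩ := hwO
    exact ⟨g, hwI.1, hwI.2⟩
  -- shrinking intervals at b
  have hshrink : ∀ ε : ℝ, 0 < ε → ∃ η : ℝ, 0 < η ∧ m b (b + η) < ε := by
    intro ε hε
    have hanti : Antitone (fun n : ℕ => Set.Ioc b (b + 1 / (n + 1))) := by
      intro i j hij
      apply Set.Ioc_subset_Ioc_right
      have h1 : (0:ℝ) < (i:ℝ) + 1 := by positivity
      have h2 : (i:ℝ) + 1 ≤ (j:ℝ) + 1 := by
        have := (Nat.cast_le (α := ℝ)).mpr hij
        linarith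
      have := one_div_le_one_div_of_le h1 h2
      linarith
    have hempty : ⋂ n : ℕ, Set.Ioc b (b + 1 / (n + 1)) = ∅ := by
      ext z
      simp only [Set.mem_iInter, Set.mem_Ioc, Set.mem_empty_iff_false, iff_false, not_forall]
      by_cases hz : b < z
      · obtain ⟨n, hn⟩ := exists_nat_one_div_lt (show (0:ℝ) < z - b from sub_pos.mpr hz)
        exact ⟨n, fun hc => absurd hc.2 (by push_neg; linarith)⟩
      · exact ⟨0, fun hc => absurd hc.1 hz⟩
    have htend := MeasureTheory.tendsto_measure_iInter_atTop (μ := μ)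
      (fun n => measurableSet_Ioc.nullMeasurableSet) hanti ⟨0, hfin _ _⟩
    rw [hempty, measure_empty] at htend
    have hev : ∀ᶠ n : ℕ in atTop, μ (Set.Ioc b (b + 1 / (n + 1))) < ENNReal.ofReal ε := by
      refine htend.eventually (gt_mem_nhds ?_)
      simpa using ENNReal.ofReal_pos.mpr hε
    obtain ⟨n, hn⟩ := hev.exists
    refine ⟨1 / (n + 1), by positivity, ?_⟩
    have := (ENNReal.lt_ofReal_iff_toReal_lt (hfin _ _)).mp hn
    simpa [hmdef] using this
  -- small elements: orbit points just right of b with huge lam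
  have hsmall : ∀ ε : ℝ, 0 < ε → ∃ g : G, (0 < φ (ρ g b) ∧ φ (ρ g b) < ε) ∧ 1 / lam g < ε := by
    intro ε hε
    have hε' : 0 < min ε (ε * Kr) := lt_min hε (mul_pos hε hKr)
    obtain ⟨η, hη, hηm⟩ := hshrink _ hε'
    obtain ⟨g, hg1, hg2⟩ := horbit η hη
    have hφg : φ (ρ g b) = m b (ρ g b) := by
      have h := hφadd b (ρ g b) (le_of_lt hg1)
      rw [hφb] at h
      linarith
    have hub1 : m b (ρ g b) ≤ m b (b + η) :=
      hmle _ _ _ _ (Set.Ioc_subset_Ioc_right hg2.le)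
    obtain ⟨z, hzΛ, hz1, hz2⟩ := hDright (ρ g b - b) (sub_pos.mpr hg1)
    have hzlt : z < ρ g b := by linarith
    have hpos : 0 < μ (Set.Ioo b (ρ g b)) := hsub hzΛ _ isOpen_Ioo ⟨hz1, hzlt⟩
    have hmpos : 0 < m b (ρ g b) := hmposIoo _ _ hpos
    have hga : b ≤ ρ g a := by
      by_contra hcon
      push_neg at hcon
      have hbmem : b ∈ Set.Ioo (ρ g a) (ρ g b) := ⟨hcon, hg1⟩
      rw [← OrderIso.image_Ioo] at hbmem
      obtain ⟨w, hw, hwb⟩ := hbmem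
      have hwval : w = ρ g⁻¹ b := by
        have := congrArg (ρ g⁻¹) hwb
        rwa [hcomp, inv_mul_cancel, hone] at this
      have h1 : w ∈ Λ := by
        rw [hwval]; exact hmemΛ g⁻¹ b hbΛ
      rcases hgap w h1 with h | h
      · linarith [hw.1]
      · linarith [hw.2]
    have hsub2 : Set.Ioo (ρ g a) (ρ g b) ⊆ Set.Ioc b (ρ g b) := by
      intro z hz
      exact ⟨lt_of_le_of_lt hga hz.1, le_of_lt hz.2⟩
    have hKb : Kr ≤ lam g * m b (ρ g b) := by
      apply hmKb
      rw [hSCO g a b]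
      exact mul_le_mul_right (measure_mono hsub2) _
    have hδe : m b (ρ g b) < min ε (ε * Kr) := lt_of_le_of_lt hub1 hηm
    refine ⟨g, ⟨by rwa [hφg], ?_⟩, ?_⟩
    · rw [hφg]
      exact lt_of_lt_of_le hδe (min_le_left _ _)
    · have hlg := hlam g
      have hδ2 : m b (ρ g b) < ε * Kr := lt_of_lt_of_le hδe (min_le_right _ _)
      rw [div_lt_iff₀ hlg]
      nlinarith [hKb, hδ2, hKr, hmpos, hlg]
  -- no common fixed point of the affine shadows
  have hnofixP : ∀ P : ℝ, ∃ u : G, φ (ρ u b) + P / lam u ≠ P := by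
    intro P
    by_contra hP
    push_neg at hP
    obtain ⟨g₁, ⟨hτ₁, _⟩, hc₁⟩ := hsmall (1/2) (by norm_num)
    have hl₁ := hlam g₁
    have h₁ := hP g₁
    rw [div_eq_mul_one_div] at h₁
    have hc₁pos : 0 < 1 / lam g₁ := by positivity
    have hPpos : 0 < P := by
      by_contra hPnp
      push_neg at hPnp
      have h2 : P * (1 - 1 / lam g₁) ≤ 0 :=
        mul_nonpos_of_nonpos_of_nonneg hPnp (by linarith)
      nlinarith [hτ₁, h₁]
    obtain ⟨g₂, ⟨hτ₂, hτ₂'⟩, hc₂⟩ := hsmall (min (P/4) (1/2)) (lt_min (by linarith) (by norm_num))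
    have hl₂ := hlam g₂
    have h₂ := hP g₂
    rw [div_eq_mul_one_div] at h₂
    have hc₂pos : 0 < 1 / lam g₂ := by positivity
    have hc₂' : 1 / lam g₂ < 1/2 := lt_of_lt_of_le hc₂ (min_le_right _ _)
    have hτ₂'' : φ (ρ g₂ b) < P/4 := lt_of_lt_of_le hτ₂' (min_le_left _ _)
    nlinarith [h₂, hτ₂'', hc₂', hPpos, hc₂pos]
  -- the element h with small positive translation and big lam
  obtain ⟨h, ⟨hτh, _⟩, hch⟩ := hsmall (1/2) (by norm_num)
  have hlh := hlam h
  have hchpos : 0 < 1 / lam h := by positivity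
  have hch1 : 1 / lam h < 1 := by linarith
  obtain ⟨u, hu⟩ := hnofixP (φ (ρ h b) / (1 - 1 / lam h))
  have hlu := hlam u
  have hcupos : 0 < 1 / lam u := by positivity
  set t₀ := φ (ρ h b) * (1 - 1 / lam u) - φ (ρ u b) * (1 - 1 / lam h) with ht₀def
  have ht₀ : t₀ ≠ 0 := by
    intro ht0
    apply hu
    rw [ht₀def] at ht0
    have h1 : lam h ≠ 0 := hlh.ne'
    have h2 : lam u ≠ 0 := hlu.ne'
    have h3 : (1 : ℝ) - 1 / lam h ≠ 0 := by
      have : (0:ℝ) < 1 - 1 / lam h := by linarith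
      exact this.ne'
    have hlh1 : (1:ℝ) < lam h := by
      rcases lt_or_ge 1 (lam h) with hc | hc
      · exact hc
      · exfalso
        have : (1:ℝ) ≤ 1 / lam h := by
          rw [le_div_iff₀ hlh]; linarith
        linarith
    have h4 : lam h - 1 ≠ 0 := by intro hc; linarith
    field_simp at ht0 ⊢
    nlinarith [ht0]
  -- the commutator k acts as translation by t₀ in φ-coordinates
  set k := h * u * h⁻¹ * u⁻¹ with hkdef
  have hkfor : ∀ t : ℝ, φ (ρ k t) = φ t + t₀ := by
    intro t
    have e0 : ρ k t = ρ h (ρ u (ρ h⁻¹ (ρ u⁻¹ t))) := by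
      rw [hcomp, hcomp, hcomp]
    rw [e0, hKEY h, hKEY u, hKEYinv h, hKEYinv u, ht₀def]
    have h1 : lam h ≠ 0 := (hlam h).ne'
    have h2 : lam u ≠ 0 := (hlam u).ne'
    field_simp
    ring
  -- conjugating k by powers of h gives arbitrarily small translations
  have hWit : ∀ (j : ℕ) (t : ℝ),
      φ (ρ (h ^ j * k * (h ^ j)⁻¹) t) = φ t + t₀ * (1 / lam h) ^ j := by
    intro j
    induction j with
    | zero =>
      intro t
      simp only [pow_zero, one_mul, inv_one, mul_one]
      simpa using hkfor t
    | succ j ih =>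
      intro t
      have e1 : h ^ (j + 1) * k * (h ^ (j + 1))⁻¹ = h * (h ^ j * k * (h ^ j)⁻¹) * h⁻¹ := by
        group
      have e2 : ρ (h ^ (j + 1) * k * (h ^ (j + 1))⁻¹) t
          = ρ h (ρ (h ^ j * k * (h ^ j)⁻¹) (ρ h⁻¹ t)) := by
        rw [hcomp, hcomp, e1]
      have e3 : φ t = φ (ρ h b) + φ (ρ h⁻¹ t) / lam h := by
        conv_lhs => rw [← hinvr h t]
        rw [hKEY h]
      have e4 : (φ (ρ h⁻¹ t) + t₀ * (1 / lam h) ^ j) / lam h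
          = φ (ρ h⁻¹ t) / lam h + t₀ * ((1 / lam h) ^ j * (1 / lam h)) := by
        rw [add_div]
        congr 1
        rw [div_eq_mul_one_div, mul_assoc]
      rw [e2, hKEY h, ih (ρ h⁻¹ t), e4, pow_succ]
      linarith [e3]
  -- choose the power: translation smaller than the gap measure
  obtain ⟨j, hj⟩ : ∃ j : ℕ, (1 / lam h) ^ j < Kr / |t₀| :=
    exists_pow_lt_of_lt_one (div_pos hKr (abs_pos.mpr ht₀)) hch1
  have hcpow : 0 < (1 / lam h) ^ j := pow_pos hchpos j
  have habs : |t₀ * (1 / lam h) ^ j| < Kr := by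
    rw [abs_mul, abs_of_pos hcpow]
    calc |t₀| * (1 / lam h) ^ j < |t₀| * (Kr / |t₀|) :=
          mul_lt_mul_of_pos_left hj (abs_pos.mpr ht₀)
      _ = Kr := by
          field_simp
  set e := t₀ * (1 / lam h) ^ j with hedef
  have he0 : e ≠ 0 := mul_ne_zero ht₀ hcpow.ne'
  set w := h ^ j * k * (h ^ j)⁻¹ with hwdef
  -- produce a point of Λ with φ-value strictly inside (-Kr, 0)
  have hgot : ∃ z ∈ Λ, φ z < 0 ∧ -Kr < φ z := by
    have habs' := abs_lt.mp habs
    rcases lt_or_gt_of_ne he0 with hneg | hpos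
    · refine ⟨ρ w b, hmemΛ w b hbΛ, ?_, ?_⟩
      · rw [hWit j b, hφb]
        simpa [hedef] using hneg
      · rw [hWit j b, hφb]
        rw [hedef] at habs'
        linarith [habs'.1]
    · refine ⟨ρ w⁻¹ b, hmemΛ w⁻¹ b hbΛ, ?_, ?_⟩
      · have hval := hWit j (ρ w⁻¹ b)
        rw [hinvr w b, hφb] at hval
        rw [hedef] at hpos
        linarith
      · have hval := hWit j (ρ w⁻¹ b)
        rw [hinvr w b, hφb] at hval
        rw [hedef] at habs'
        linarith [habs'.2]
  obtain ⟨z, hzΛ, hz1, hz2⟩ := hgot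
  rcases hgap z hzΛ with hle | hge
  · have h1 : φ z ≤ φ a := hφmono hle
    have h2 : φ a = -(m a b) := by
      have h3 := hφadd a b hab.le
      rw [hφb] at h3
      linarith
    have h3 : Kr ≤ m a b := hmab
    linarith
  · have h1 : φ b ≤ φ z := hφmono hge
    rw [hφb] at h1
    linarith
end

section
/- Let G be a group of affine transformations of ℝ, each of the form x ↦ a·x + b with a > 0. Suppose G has no global fixed point (no x ∈ ℝ satisfies g(x) = x for all g ∈ G), and suppose some G-orbit has an accumulation point in ℝ. Then every G-orbit is dense in ℝ. -/
open Filter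

/-- If a group of affine transformations `x ↦ a g * x + b g` of ℝ with positive slopes
has no global fixed point and some orbit has an accumulation point, then every orbit is
dense in ℝ. -/
theorem affine_orbit_dense {G : Type*} [Group G]
    (a b : G → ℝ) (ha : ∀ g : G, 0 < a g)
    (hmul_a : ∀ g h : G, a (g * h) = a g * a h)
    (hmul_b : ∀ g h : G, b (g * h) = a g * b h + b g)
    (hnofix : ¬ ∃ x : ℝ, ∀ g : G, a g * x + b g = x)
    (hacc : ∃ x₀ y : ℝ, AccPt y (𝓟 (Set.range fun g : G => a g * x₀ + b g))) :
    ∀ x : ℝ, Dense (Set.range fun g : G => a g * x + b g) := by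
  classical
  -- basic facts
  have a1 : a 1 = 1 := by
    have h := hmul_a 1 1
    rw [one_mul] at h
    have h2 : a 1 * (a 1 - 1) = 0 := by linear_combination -h
    rcases mul_eq_zero.mp h2 with h3 | h3
    · exact absurd h3 (ha 1).ne'
    · linarith
  have b1 : b 1 = 0 := by
    have h := hmul_b 1 1
    rw [one_mul, a1, one_mul] at h
    linarith
  have ainv : ∀ g : G, a g⁻¹ = (a g)⁻¹ := by
    intro g
    have h := hmul_a g g⁻¹
    rw [mul_inv_cancel, a1] at h
    exact eq_inv_of_mul_eq_one_right h.symm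
  have binv : ∀ g : G, b g⁻¹ = -(b g) / a g := by
    intro g
    have h := hmul_b g g⁻¹
    rw [mul_inv_cancel, b1] at h
    rw [eq_div_iff (ha g).ne']
    linarith
  have act_mul : ∀ g h : G, ∀ r : ℝ,
      a (g * h) * r + b (g * h) = a g * (a h * r + b h) + b g := by
    intro g h r
    rw [hmul_a, hmul_b]; ring
  -- key claim: arbitrarily small nonzero translations
  have hsmall : ∀ ε : ℝ, 0 < ε → ∃ g : G, a g = 1 ∧ 0 < |b g| ∧ |b g| < ε := by
    by_cases hcase : ∃ g : G, a g ≠ 1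
    · -- some slope ≠ 1
      intro ε hε
      obtain ⟨g0, hg0⟩ := hcase
      obtain ⟨g, hglt⟩ : ∃ g : G, a g < 1 := by
        rcases lt_or_gt_of_ne hg0 with h | h
        · exact ⟨g0, h⟩
        · exact ⟨g0⁻¹, by rw [ainv]; exact inv_lt_one_of_one_lt₀ h⟩
      have hlam0 : 0 < a g := ha g
      have h1lam : (0:ℝ) < 1 - a g := by linarith
      set lam := a g with hlamdef
      set p : ℝ := b g / (1 - lam) with hpdef
      have hbg : b g = p * (1 - lam) := by
        rw [hpdef]; exact (div_mul_cancel₀ (b g) h1lam.ne').symm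
      have fixg : a g * p + b g = p := by
        rw [← hlamdef, hbg]; ring
      push_neg at hnofix
      obtain ⟨w, hw⟩ := hnofix p
      set q : ℝ := a w * p + b w with hqdef
      have hqp : q ≠ p := hw
      set k : G := w * g * w⁻¹ with hkdef
      have ak : a k = lam := by
        rw [hkdef, hmul_a, hmul_a, ainv]
        field_simp [(ha w).ne']
        exact hlamdef.symm
      have hwinv : a w⁻¹ * q + b w⁻¹ = p := by
        rw [ainv, binv, hqdef, mul_add, inv_mul_cancel_left₀ (ha w).ne', neg_div,
          inv_mul_eq_div]
        ring
      have fixk : a k * q + b k = q := by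
        rw [hkdef]
        rw [act_mul (w * g) w⁻¹ q, hwinv, act_mul w g p, fixg, ← hqdef]
      -- powers
      have pow_fix : ∀ (u : G) (c : ℝ), a u * c + b u = c →
          ∀ n : ℕ, a (u ^ n) = (a u) ^ n ∧ a (u ^ n) * c + b (u ^ n) = c := by
        intro u c hc n
        induction n with
        | zero => simp [a1, b1]
        | succ n ih =>
          refine ⟨?_, ?_⟩
          · rw [pow_succ, hmul_a, ih.1, pow_succ]
          · rw [pow_succ, act_mul (u ^ n) u c, hc, ih.2]
      have bgn : ∀ n : ℕ, a (g ^ n) = lam ^ n ∧ b (g ^ n) = p - lam ^ n * p := by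
        intro n
        obtain ⟨h1, h2⟩ := pow_fix g p fixg n
        rw [h1] at h2
        exact ⟨h1, by linarith⟩
      have bkn : ∀ n : ℕ, a (k ^ n) = lam ^ n ∧ b (k ^ n) = q - lam ^ n * q := by
        intro n
        obtain ⟨h1, h2⟩ := pow_fix k q fixk n
        rw [ak] at h1
        rw [h1] at h2
        exact ⟨h1, by linarith⟩
      have hlamn : ∀ n : ℕ, (0:ℝ) < lam ^ n := fun n => pow_pos hlam0 n
      -- translations t n = g^n * (k^n)⁻¹
      have ht : ∀ n : ℕ, a (g ^ n * (k ^ n)⁻¹) = 1 ∧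
          b (g ^ n * (k ^ n)⁻¹) = (p - q) * (1 - lam ^ n) := by
        intro n
        obtain ⟨hag, hbg'⟩ := bgn n
        obtain ⟨hak, hbk⟩ := bkn n
        constructor
        · rw [hmul_a, ainv, hag, hak, mul_inv_cancel₀ (hlamn n).ne']
        · rw [hmul_b, binv, hag, hak, hbg', hbk, mul_comm,
            div_mul_cancel₀ _ (hlamn n).ne']
          ring
      -- differences d n = t(n+1) * (t n)⁻¹
      have hd : ∀ n : ℕ, ∃ d : G, a d = 1 ∧ b d = (p - q) * (lam ^ n - lam ^ (n + 1)) := by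
        intro n
        refine ⟨(g ^ (n+1) * (k ^ (n+1))⁻¹) * (g ^ n * (k ^ n)⁻¹)⁻¹, ?_, ?_⟩
        · rw [hmul_a, ainv, (ht (n+1)).1, (ht n).1]; norm_num
        · rw [hmul_b, binv, (ht (n+1)).1, (ht n).1, (ht (n+1)).2, (ht n).2]
          ring
      -- choose n with small value
      have hpq : p - q ≠ 0 := sub_ne_zero.mpr (Ne.symm hqp)
      have hC : (0:ℝ) < |p - q| * (1 - lam) := by
        positivity
      obtain ⟨n, hn⟩ := exists_pow_lt_of_lt_one (div_pos hε hC) hglt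
      obtain ⟨d, hd1, hd2⟩ := hd n
      refine ⟨d, hd1, ?_, ?_⟩
      · rw [hd2]
        have : (p - q) * (lam ^ n - lam ^ (n + 1)) ≠ 0 := by
          apply mul_ne_zero hpq
          have : lam ^ (n+1) < lam ^ n := by
            rw [pow_succ]
            nlinarith [hlamn n]
          linarith
        exact abs_pos.mpr this
      · rw [hd2, abs_mul]
        have h1 : |lam ^ n - lam ^ (n+1)| = lam ^ n * (1 - lam) := by
          rw [abs_of_pos]
          · rw [pow_succ]; ring
          · rw [pow_succ]; nlinarith [hlamn n]
        rw [h1]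
        rw [lt_div_iff₀ hC] at hn
        calc |p - q| * (lam ^ n * (1 - lam)) = lam ^ n * (|p - q| * (1 - lam)) := by ring
          _ < ε := hn
    · -- all slopes are 1: use the accumulation point
      push_neg at hcase
      obtain ⟨x₀, y, hy⟩ := hacc
      rw [accPt_iff_nhds] at hy
      intro ε hε
      obtain ⟨s₁, ⟨hs₁b, ⟨g₁, hg₁⟩⟩, hs₁y⟩ := hy (Metric.ball y (ε / 2))
        (Metric.ball_mem_nhds y (by linarith))
      obtain ⟨s₂, ⟨hs₂b, ⟨g₂, hg₂⟩⟩, hs₂y⟩ := hy (Metric.ball y (min (ε / 2) (dist s₁ y)))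
        (Metric.ball_mem_nhds y (lt_min (by linarith) (dist_pos.mpr hs₁y)))
      have hne : s₂ ≠ s₁ := by
        intro hcontra
        rw [Metric.mem_ball, hcontra] at hs₂b
        exact absurd (lt_of_lt_of_le hs₂b (min_le_right _ _)) (lt_irrefl _)
      have hg₁' : x₀ + b g₁ = s₁ := by simpa [hcase g₁] using hg₁
      have hg₂' : x₀ + b g₂ = s₂ := by simpa [hcase g₂] using hg₂
      have hb : b (g₁ * g₂⁻¹) = s₁ - s₂ := by
        rw [hmul_b, binv, hcase g₁, hcase g₂, one_mul, div_one]
        linarith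
      refine ⟨g₁ * g₂⁻¹, by rw [hmul_a, ainv, hcase g₁, hcase g₂, inv_one, one_mul], ?_, ?_⟩
      · rw [hb]
        exact abs_pos.mpr (sub_ne_zero.mpr (Ne.symm hne))
      · rw [hb]
        rw [Metric.mem_ball, Real.dist_eq] at hs₁b hs₂b
        have h2 : |s₂ - y| < ε / 2 := lt_of_lt_of_le hs₂b (min_le_left _ _)
        calc |s₁ - s₂| = |(s₁ - y) - (s₂ - y)| := by ring_nf
          _ ≤ |s₁ - y| + |s₂ - y| := abs_sub _ _
          _ < ε / 2 + ε / 2 := add_lt_add hs₁b h2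
          _ = ε := by ring
  -- the subgroup of translations
  let B : AddSubgroup ℝ :=
    { carrier := {c | ∃ g : G, a g = 1 ∧ b g = c}
      add_mem' := by
        rintro c d ⟨g, hg, rfl⟩ ⟨h, hh, rfl⟩
        exact ⟨g * h, by rw [hmul_a, hg, hh, one_mul],
          by rw [hmul_b, hg, one_mul]; ring⟩
      zero_mem' := ⟨1, a1, b1⟩
      neg_mem' := by
        rintro c ⟨g, hg, rfl⟩
        exact ⟨g⁻¹, by rw [ainv, hg, inv_one], by rw [binv, hg]; ring⟩ }
  have hBdense : Dense (B : Set ℝ) := by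
    apply AddSubgroup.dense_of_not_isolated_zero
    intro ε hε
    obtain ⟨g, hg1, hgpos, hglt⟩ := hsmall ε hε
    rcases abs_cases (b g) with ⟨h1, h2⟩ | ⟨h1, h2⟩
    · exact ⟨b g, ⟨g, hg1, rfl⟩, by rw [← h1]; exact ⟨hgpos, hglt⟩⟩
    · refine ⟨-(b g), ⟨g⁻¹, by rw [ainv, hg1, inv_one], by rw [binv, hg1]; ring⟩, ?_⟩
      rw [← h1]
      exact ⟨hgpos, hglt⟩
  intro x
  rw [Metric.dense_iff]
  intro z r hr
  obtain ⟨c, hc, hdist⟩ := hBdense.exists_dist_lt (z - x) hr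
  obtain ⟨g, hg1, hg2⟩ := hc
  refine ⟨a g * x + b g, ?_, ⟨g, rfl⟩⟩
  rw [Metric.mem_ball, Real.dist_eq, hg1, one_mul, hg2]
  rw [Real.dist_eq] at hdist
  rw [abs_sub_comm]
  calc |z - (x + c)| = |(z - x) - c| := by ring_nf
    _ < r := hdist
end

section
/- Let G be a group acting on the real line by order-preserving homeomorphisms via ρ₁, and let ρ₂ be another action of G on ℝ by order-preserving homeomorphisms. Suppose c : ℝ → ℝ is a continuous, non-decreasing, surjective map satisfying ρ₂(g) ∘ c = c ∘ ρ₁(g) for all g ∈ G. If there exists a nonzero Radon measure ν on ℝ invariant under the action ρ₂, then there exists a nonzero Radon measure μ on ℝ invariant under the action ρ₁. -/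
open MeasureTheory

section Aux
open MeasureTheory Set Filter Topology

-- auxiliary: distribution function of a measure finite on Ioc's
noncomputable def distF (ν : Measure ℝ) : ℝ → ℝ :=
  fun y => (ν (Ioc 0 y)).toReal - (ν (Ioc y 0)).toReal

lemma distF_diff (ν : Measure ℝ) (hfin : ∀ s t : ℝ, ν (Ioc s t) ≠ ⊤)
    {s t : ℝ} (hst : s ≤ t) : distF ν t - distF ν s = (ν (Ioc s t)).toReal := by
  unfold distF
  rcases le_total 0 s with h0s | hs0
  · rw [Ioc_eq_empty (not_lt.2 h0s), Ioc_eq_empty (not_lt.2 (h0s.trans hst))]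
    have : ν (Ioc 0 t) = ν (Ioc 0 s) + ν (Ioc s t) := by
      rw [← measure_union (Set.Ioc_disjoint_Ioc_of_le le_rfl) measurableSet_Ioc,
        Ioc_union_Ioc_eq_Ioc h0s hst]
    rw [this, ENNReal.toReal_add (hfin _ _) (hfin _ _)]
    simp only [measure_empty, ENNReal.toReal_zero]; ring
  · rcases le_total t 0 with ht0 | h0t
    · rw [Ioc_eq_empty (not_lt.2 (hst.trans ht0)), Ioc_eq_empty (not_lt.2 ht0)]
      have : ν (Ioc s 0) = ν (Ioc s t) + ν (Ioc t 0) := by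
        rw [← measure_union (Set.Ioc_disjoint_Ioc_of_le le_rfl) measurableSet_Ioc,
          Ioc_union_Ioc_eq_Ioc hst ht0]
      rw [this, ENNReal.toReal_add (hfin _ _) (hfin _ _)]
      simp only [measure_empty, ENNReal.toReal_zero]; ring
    · rw [Ioc_eq_empty (not_lt.2 hs0), Ioc_eq_empty (not_lt.2 h0t)]
      have : ν (Ioc s t) = ν (Ioc s 0) + ν (Ioc 0 t) := by
        rw [← measure_union (Set.Ioc_disjoint_Ioc_of_le le_rfl) measurableSet_Ioc,
          Ioc_union_Ioc_eq_Ioc hs0 h0t]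
      rw [this, ENNReal.toReal_add (hfin _ _) (hfin _ _)]
      simp only [measure_empty, ENNReal.toReal_zero]; ring

lemma distF_mono (ν : Measure ℝ) (hfin : ∀ s t : ℝ, ν (Ioc s t) ≠ ⊤) :
    Monotone (distF ν) := fun s t hst =>
  sub_nonneg.mp (by rw [distF_diff ν hfin hst]; exact ENNReal.toReal_nonneg)

lemma distF_right_continuous (ν : Measure ℝ) (hfin : ∀ s t : ℝ, ν (Ioc s t) ≠ ⊤)
    (y : ℝ) : ContinuousWithinAt (distF ν) (Ici y) y := by
  rw [← continuousWithinAt_diff_self, Ici_sdiff_left]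
  have hiInter : (⋂ r > y, Ioc y r) = (∅ : Set ℝ) := by
    ext x
    simp only [mem_iInter, mem_Ioc, mem_empty_iff_false, iff_false, not_forall]
    by_cases hyx : y < x
    · exact ⟨(y + x) / 2, by linarith, fun h => by linarith [h.2]⟩
    · exact ⟨y + 1, by linarith, fun h => hyx h.1⟩
  have h1 : Tendsto (fun t => ν (Ioc y t)) (𝓝[>] y) (𝓝 0) := by
    have := tendsto_measure_biInter_gt (μ := ν) (s := fun r => Ioc y r) (a := y)
      (fun r _ => measurableSet_Ioc.nullMeasurableSet)
      (fun i j _ hij => Ioc_subset_Ioc_right hij)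
      ⟨y + 1, by linarith, hfin _ _⟩
    rwa [hiInter, measure_empty] at this
  have h2 : Tendsto (fun t => (ν (Ioc y t)).toReal) (𝓝[>] y) (𝓝 0) := by
    have := (ENNReal.tendsto_toReal (a := 0) (by simp)).comp h1
    exact this
  have h3 : Tendsto (fun t => distF ν y + (ν (Ioc y t)).toReal) (𝓝[>] y)
      (𝓝 (distF ν y)) := by
    simpa using (tendsto_const_nhds (x := distF ν y)).add h2
  refine Tendsto.congr' ?_ h3
  filter_upwards [self_mem_nhdsWithin] with t ht
  have := distF_diff ν hfin (le_of_lt ht)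
  linarith

end Aux

open Set Filter Topology in
/-- If an action `ρ₁` of `G` on the line by order-preserving homeomorphisms is
semi-conjugate, via a continuous non-decreasing surjection `c`, to an action `ρ₂`
preserving a nonzero Radon measure, then `ρ₁` also preserves a nonzero Radon measure. -/
theorem pullback_invariant_measure {G : Type*} [Group G]
    (ρ₁ ρ₂ : G →* (ℝ ≃o ℝ))
    (c : ℝ → ℝ) (hcont : Continuous c) (hmono : Monotone c)
    (hsurj : Function.Surjective c)
    (hsemi : ∀ (g : G) (x : ℝ), ρ₂ g (c x) = c (ρ₁ g x))
    (ν : Measure ℝ) (hν : ν ≠ 0) (hνrad : IsRadon ν)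
    (hνinv : ∀ g : G, Measure.map (⇑(ρ₂ g)) ν = ν) :
    ∃ μ : Measure ℝ, μ ≠ 0 ∧ IsRadon μ ∧
      ∀ g : G, Measure.map (⇑(ρ₁ g)) μ = μ := by
  have hfin : ∀ s t : ℝ, ν (Ioc s t) ≠ ⊤ := fun s t =>
    ((measure_mono Ioc_subset_Icc_self).trans_lt (hνrad _ isCompact_Icc)).ne
  -- the Stieltjes function F ∘ c
  set f : StieltjesFunction ℝ :=
    { toFun := distF ν ∘ c
      mono' := (distF_mono ν hfin).comp hmono
      right_continuous' := fun x =>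
        (distF_right_continuous ν hfin (c x)).comp hcont.continuousWithinAt
          (fun y hy => hmono hy) } with hf
  set μ : Measure ℝ := f.measure with hμ
  have hμIoc : ∀ a b : ℝ, a ≤ b → μ (Ioc a b) = ν (Ioc (c a) (c b)) := by
    intro a b hab
    rw [hμ, f.measure_Ioc]
    show ENNReal.ofReal (distF ν (c b) - distF ν (c a)) = _
    rw [distF_diff ν hfin (hmono hab), ENNReal.ofReal_toReal (hfin _ _)]
  refine ⟨μ, ?_, ?_, ?_⟩
  · -- nonzero
    intro h0
    apply hν
    have hIoc0 : ∀ s t : ℝ, ν (Ioc s t) = 0 := by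
      intro s t
      rcases le_total t s with h | h
      · rw [Ioc_eq_empty (not_lt.2 h), measure_empty]
      · obtain ⟨a, rfl⟩ := hsurj s
        obtain ⟨b, rfl⟩ := hsurj t
        rcases le_total a b with hab | hba
        · rw [← hμIoc a b hab, h0]; rfl
        · rw [le_antisymm h (hmono hba), Ioc_self, measure_empty]
    have huniv : ν (univ : Set ℝ) = 0 := by
      have hsub : (univ : Set ℝ) ⊆ ⋃ n : ℕ, Ioc (-(n : ℝ)) n := by
        intro x _
        rcases exists_nat_gt |x| with ⟨n, hn⟩
        exact mem_iUnion.2 ⟨n, (abs_lt.1 hn).1, le_of_lt (lt_of_abs_lt hn)⟩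
      refine le_antisymm ?_ zero_le
      calc ν univ ≤ ν (⋃ n : ℕ, Ioc (-(n : ℝ)) n) := measure_mono hsub
        _ ≤ ∑' n : ℕ, ν (Ioc (-(n : ℝ)) n) := measure_iUnion_le _
        _ = 0 := by simp [hIoc0]
    exact Measure.measure_univ_eq_zero.mp huniv
  · -- Radon
    exact fun K hK => hK.measure_lt_top
  · -- invariance
    intro g
    have hmeas : Measurable ⇑(ρ₁ g) := ((ρ₁ g).toHomeomorph).continuous.measurable
    refine (Measure.ext_of_Ioc μ _ fun a b hab => ?_).symm
    rw [Measure.map_apply hmeas measurableSet_Ioc, (ρ₁ g).preimage_Ioc]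
    have hmeas2 : Measurable ⇑(ρ₂ g) := ((ρ₂ g).toHomeomorph).continuous.measurable
    have hc : ∀ x : ℝ, c ((ρ₁ g).symm x) = (ρ₂ g).symm (c x) := by
      intro x
      have := hsemi g ((ρ₁ g).symm x)
      rw [OrderIso.apply_symm_apply] at this
      exact ((ρ₂ g).symm_apply_eq.2 this.symm).symm
    rw [hμIoc _ _ ((ρ₁ g).symm.monotone hab.le), hc, hc,
      ← (ρ₂ g).preimage_Ioc, ← Measure.map_apply hmeas2 measurableSet_Ioc,
      hνinv g, ← hμIoc a b hab.le]
end
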